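/- arXiv:2602.05593 — 2 statements merged into one kernel-verified Lean document; each statement's English description precedes it below -/
import Mathlib

section
/- Let μ be a self-similar measure on ℝ. Then there exist real numbers s_F, s_M with 0 < s_F ≤ s_M < ∞ and a constant C ≥ 1 such that for all x in the topological support of μ, all y ∈ ℝ, and all 0 < r ≤ 1: μ((x − r, x + r)) ≥ C⁻¹ r^{s_M} and μ((y − r, y + r)) ≤ C r^{s_F}. -/
open MeasureTheory Filter Set
open scoped ENNReal NNReal

/-- The topological support of a measure on `ℝ`. -/
def msupport (μ : Measure ℝ) : Set ℝ := {x | ∀ ε > 0, 0 < μ (Metric.ball x ε)}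

-- complement of msupport is null
lemma msupport_compl_null (μ : Measure ℝ) : μ (msupport μ)ᶜ = 0 := by
  have : (msupport μ)ᶜ ⊆ ⋃ (q : ℚ × ℚ) (_ : μ (Metric.ball (q.1 : ℝ) (q.2 : ℝ)) = 0),
      Metric.ball (q.1 : ℝ) (q.2 : ℝ) := by
    intro x hx
    simp only [msupport, mem_compl_iff, mem_setOf_eq, not_forall] at hx
    obtain ⟨ε, hε, hx⟩ := hx
    push_neg at hx
    have hx0 : μ (Metric.ball x ε) = 0 := le_antisymm hx (zero_le)
    obtain ⟨q1, hq1⟩ := exists_rat_btwn (by linarith : x - ε/4 < x)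
    obtain ⟨q2, hq2⟩ := exists_rat_btwn (by linarith : (ε/4 : ℝ) < ε/2)
    have hsub : Metric.ball (q1 : ℝ) (q2 : ℝ) ⊆ Metric.ball x ε := by
      intro y hy
      simp only [Metric.mem_ball, Real.dist_eq] at hy ⊢
      have h1 : |x - (q1:ℝ)| < ε/4 := by
        rw [abs_sub_lt_iff]; constructor <;> linarith [hq1.1, hq1.2]
      calc |y - x| ≤ |y - q1| + |q1 - (x:ℝ)| := abs_sub_le _ _ _
        _ < ε/2 + ε/4 := by
            have := abs_sub_comm (q1 : ℝ) x
            refine add_lt_add (lt_trans hy hq2.2) ?_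
            rw [abs_sub_comm]; exact h1
        _ < ε := by linarith
    refine mem_iUnion.2 ⟨(q1, q2), mem_iUnion.2 ⟨?_, ?_⟩⟩
    · exact le_antisymm ((measure_mono hsub).trans hx0.le) (zero_le)
    · simp only [Metric.mem_ball, Real.dist_eq]
      have h1 : |x - (q1:ℝ)| < ε/4 := by
        rw [abs_sub_lt_iff]; constructor <;> linarith [hq1.1, hq1.2]
      calc |x - (q1:ℝ)| < ε/4 := h1
        _ < q2 := hq2.1
  refine le_antisymm (le_trans (measure_mono this) (le_of_eq ?_)) (zero_le)
  refine measure_iUnion_null fun q => ?_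
  by_cases h : μ (Metric.ball (q.1 : ℝ) (q.2 : ℝ)) = 0
  · exact measure_iUnion_null fun _ => h
  · simp [h]

variable {m : ℕ} {r c p : Fin m → ℝ} {μ : Measure ℝ}

lemma hinv_apply (hinv : μ = ∑ a, ENNReal.ofReal (p a) • Measure.map (fun x : ℝ => r a * x + c a) μ)
    {A : Set ℝ} (hA : MeasurableSet A) :
    μ A = ∑ a, ENNReal.ofReal (p a) * μ ((fun x : ℝ => r a * x + c a) ⁻¹' A) := by
  conv_lhs => rw [hinv]
  rw [Measure.finset_sum_apply]
  refine Finset.sum_congr rfl fun a _ => ?_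
  rw [Measure.smul_apply, smul_eq_mul,
    Measure.map_apply (by fun_prop) hA]

lemma psum_one (hp : ∀ a, 0 < p a) (hpsum : ∑ a, p a = 1) :
    (∑ a, ENNReal.ofReal (p a)) = 1 := by
  rw [← ENNReal.ofReal_sum_of_nonneg (fun a _ => (hp a).le), hpsum, ENNReal.ofReal_one]

lemma supp_bdd (hm : 0 < m)
    (hr : ∀ a, 0 < |r a| ∧ |r a| < 1) (hp : ∀ a, 0 < p a) (hpsum : ∑ a, p a = 1)
    (hprob : IsProbabilityMeasure μ)
    (hinv : μ = ∑ a, ENNReal.ofReal (p a) • Measure.map (fun x : ℝ => r a * x + c a) μ) :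
    ∃ R : ℝ, 1 ≤ R ∧ μ {x : ℝ | R < |x|} = 0 := by
  haveI : Nonempty (Fin m) := ⟨⟨0, hm⟩⟩
  obtain ⟨a0⟩ : Nonempty (Fin m) := ⟨⟨0, hm⟩⟩
  set rmax : ℝ := Finset.univ.sup' Finset.univ_nonempty (fun a => |r a|) with hrmaxdef
  have hrmax1 : rmax < 1 := by
    rw [hrmaxdef]
    exact (Finset.sup'_lt_iff Finset.univ_nonempty).2 fun a _ => (hr a).2
  have hrm : ∀ a, |r a| ≤ rmax := fun a => by
    rw [hrmaxdef]; exact Finset.le_sup' (fun a => |r a|) (Finset.mem_univ a)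
  have hrmax0 : 0 < rmax := lt_of_lt_of_le (hr a0).1 (hrm a0)
  set M : ℝ := Finset.univ.sup' Finset.univ_nonempty (fun a => |c a|) with hMdef
  have hM : ∀ a, |c a| ≤ M := fun a => by
    rw [hMdef]; exact Finset.le_sup' (fun a => |c a|) (Finset.mem_univ a)
  have hM0 : 0 ≤ M := (abs_nonneg _).trans (hM a0)
  set R₀ : ℝ := M / (1 - rmax) + 1 with hR₀
  set ε₀ : ℝ := (1 - rmax) / rmax with hε₀
  have hε₀pos : 0 < ε₀ := div_pos (by linarith) hrmax0
  have hR₀1 : 1 ≤ R₀ := by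
    have : 0 ≤ M / (1 - rmax) := div_nonneg hM0 (by linarith)
    rw [hR₀]; linarith
  set q : ℝ → ℝ≥0∞ := fun R => μ {x : ℝ | R < |x|} with hq
  have hmeas : ∀ R : ℝ, MeasurableSet {x : ℝ | R < |x|} := by
    intro R
    have : {x : ℝ | R < |x|} = (fun x : ℝ => |x|) ⁻¹' Ioi R := rfl
    rw [this]; exact measurable_abs measurableSet_Ioi
  have step : ∀ R : ℝ, R₀ ≤ R → q R ≤ q (R + ε₀) := by
    intro R hR
    have h1 : q R ≤ q ((R - M) / rmax) := by
      rw [hq]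
      simp only
      rw [hinv_apply hinv (hmeas R)]
      calc (∑ a, ENNReal.ofReal (p a) * μ ((fun x : ℝ => r a * x + c a) ⁻¹' {x : ℝ | R < |x|}))
          ≤ ∑ a, ENNReal.ofReal (p a) * μ {x : ℝ | (R - M) / rmax < |x|} := by
            refine Finset.sum_le_sum fun a _ => ?_
            refine mul_le_mul_right (measure_mono ?_) _
            intro x hx
            simp only [mem_preimage, mem_setOf_eq] at hx ⊢
            have h2 : |r a * x + c a| ≤ |r a| * |x| + M :=
              (abs_add_le _ _).trans (by rw [abs_mul]; linarith [hM a])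
            have h3 : R - M < |r a| * |x| := by linarith
            have h4 : |r a| * |x| ≤ rmax * |x| :=
              mul_le_mul_of_nonneg_right (hrm a) (abs_nonneg x)
            rw [div_lt_iff₀ hrmax0]
            calc R - M < |r a| * |x| := h3
              _ = |x| * |r a| := mul_comm _ _
              _ ≤ |x| * rmax := by rw [mul_comm |x| (|r a|), mul_comm |x| rmax]; exact h4
        _ = q ((R - M) / rmax) := by
            rw [← Finset.sum_mul, psum_one hp hpsum, one_mul]
    have h2 : (R + ε₀) ≤ (R - M) / rmax := by
      rw [le_div_iff₀ hrmax0]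
      have hRM : M + (1 - rmax) ≤ R * (1 - rmax) := by
        have : M / (1 - rmax) + 1 ≤ R := hR
        have h5 : 0 < 1 - rmax := by linarith
        calc M + (1 - rmax) = (M / (1 - rmax) + 1) * (1 - rmax) := by field_simp
          _ ≤ R * (1 - rmax) := by nlinarith
      rw [hε₀]
      have : (R + (1 - rmax) / rmax) * rmax = R * rmax + (1 - rmax) := by field_simp
      rw [this]; nlinarith
    exact h1.trans (measure_mono fun x hx => lt_of_le_of_lt (by linarith : R + ε₀ ≤ (R - M)/rmax) hx)
  have iter : ∀ n : ℕ, q R₀ ≤ q (R₀ + n * ε₀) := by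
    intro n
    induction n with
    | zero => simp
    | succ k ih =>
      refine ih.trans ?_
      have hk : (0:ℝ) ≤ (k:ℝ) * ε₀ := mul_nonneg (Nat.cast_nonneg k) hε₀pos.le
      have h := step (R₀ + (k:ℝ) * ε₀) (by linarith)
      refine h.trans (le_of_eq ?_)
      congr 1
      push_cast
      ring
  refine ⟨R₀, hR₀1, ?_⟩
  have hinter : (⋂ n : ℕ, {x : ℝ | R₀ + (n:ℝ) * ε₀ < |x|}) = ∅ := by
    ext x
    simp only [mem_iInter, mem_setOf_eq, mem_empty_iff_false, iff_false, not_forall, not_lt]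
    obtain ⟨n, hn⟩ := exists_nat_gt ((|x| - R₀) / ε₀)
    refine ⟨n, ?_⟩
    have := (div_lt_iff₀ hε₀pos).1 hn
    linarith
  have hq0 : q R₀ ≤ μ (⋂ n : ℕ, {x : ℝ | R₀ + (n:ℝ) * ε₀ < |x|}) := by
    rw [Directed.measure_iInter
      (fun n => (hmeas _).nullMeasurableSet)
      (Antitone.directed_ge ?_) ⟨0, measure_ne_top μ _⟩]
    · exact le_iInf fun n => iter n
    · intro n k hnk x hx
      simp only [mem_setOf_eq] at hx ⊢
      have : (n:ℝ) * ε₀ ≤ (k:ℝ) * ε₀ :=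
        mul_le_mul_of_nonneg_right (Nat.cast_le.2 hnk) hε₀pos.le
      linarith
  rw [hinter] at hq0
  simpa using hq0

variable {m : ℕ}

def Sw (r c : Fin m → ℝ) : List (Fin m) → ℝ → ℝ
  | [] => id
  | a :: w => (fun x => r a * x + c a) ∘ Sw r c w

def rr (r : Fin m → ℝ) (w : List (Fin m)) : ℝ := (w.map fun a => |r a|).prod
def pp (p : Fin m → ℝ) (w : List (Fin m)) : ℝ := (w.map p).prod

@[simp] lemma rr_nil (r : Fin m → ℝ) : rr r [] = 1 := rfl
@[simp] lemma rr_cons (r : Fin m → ℝ) (a : Fin m) (w : List (Fin m)) :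
    rr r (a :: w) = |r a| * rr r w := by simp [rr]
@[simp] lemma pp_nil (p : Fin m → ℝ) : pp p [] = 1 := rfl
@[simp] lemma pp_cons (p : Fin m → ℝ) (a : Fin m) (w : List (Fin m)) :
    pp p (a :: w) = p a * pp p w := by simp [pp]

lemma pp_nonneg {p : Fin m → ℝ} (hp : ∀ a, 0 < p a) (w : List (Fin m)) : 0 ≤ pp p w := by
  induction w with
  | nil => norm_num
  | cons a w ih => simp only [pp_cons]; exact mul_nonneg (hp a).le ih

lemma rr_pos {r : Fin m → ℝ} (hr : ∀ a, 0 < |r a| ∧ |r a| < 1) (w : List (Fin m)) :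
    0 < rr r w := by
  induction w with
  | nil => norm_num
  | cons a w ih => simp only [rr_cons]; exact mul_pos (hr a).1 ih

lemma Sw_measurable (r c : Fin m → ℝ) (w : List (Fin m)) : Measurable (Sw r c w) := by
  induction w with
  | nil => exact measurable_id
  | cons a w ih => exact ((measurable_id.const_mul _).add_const _).comp ih

lemma Sw_affine (r c : Fin m → ℝ) (w : List (Fin m)) :
    ∃ b d : ℝ, (Sw r c w = fun x => b * x + d) ∧ |b| = rr r w := by
  induction w with
  | nil => exact ⟨1, 0, by funext x; simp [Sw], by simp⟩
  | cons a w ih =>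
    obtain ⟨b, d, hbd, habs⟩ := ih
    refine ⟨r a * b, r a * d + c a, ?_, ?_⟩
    · funext x
      show r a * (Sw r c w x) + c a = _
      rw [hbd]; ring
    · rw [abs_mul, habs, rr_cons]

lemma affine_preimage_ball (b d y ρ : ℝ) (hb : b ≠ 0) :
    (fun x => b * x + d) ⁻¹' Metric.ball y ρ = Metric.ball ((y - d)/b) (ρ / |b|) := by
  ext x
  simp only [mem_preimage, Metric.mem_ball, Real.dist_eq]
  rw [lt_div_iff₀ (abs_pos.2 hb), ← abs_mul]
  have e : (x - (y - d) / b) * b = b * x + d - y := by field_simp; ring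
  constructor <;> intro h
  · rw [e]; exact h
  · rw [e] at h; exact h

noncomputable def sec (r : Fin m → ℝ) : ℕ → ℝ → Finset (List (Fin m))
  | 0, _ => ∅
  | n+1, t => Finset.univ.biUnion fun a =>
      if |r a| ≤ t then {[a]} else (sec r n (t / |r a|)).image (a :: ·)

lemma sec_mem {r : Fin m → ℝ} (hr : ∀ a, 0 < |r a| ∧ |r a| < 1)
    {rmin : ℝ} (hrmin0 : 0 < rmin) (hrmin : ∀ a, rmin ≤ |r a|) :
    ∀ n (t : ℝ), 0 < t → t < 1 → ∀ w ∈ sec r n t, rr r w ≤ t ∧ rmin * t < rr r w := by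
  intro n
  induction n with
  | zero => intro t _ _ w hw; simp [sec] at hw
  | succ k ih =>
    intro t ht ht1 w hw
    simp only [sec, Finset.mem_biUnion, Finset.mem_univ, true_and] at hw
    obtain ⟨a, ha⟩ := hw
    by_cases hle : |r a| ≤ t
    · rw [if_pos hle, Finset.mem_singleton] at ha
      subst ha
      simp only [rr_cons, rr_nil, mul_one]
      exact ⟨hle, lt_of_lt_of_le (by nlinarith [hrmin a, (hr a).1]) (hrmin a)⟩
    · rw [if_neg hle, Finset.mem_image] at ha
      obtain ⟨w', hw', rfl⟩ := ha
      push_neg at hle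
      have hra := (hr a).1
      have h1 : 0 < t / |r a| := div_pos ht hra
      have h2 : t / |r a| < 1 := (div_lt_one hra).2 hle
      obtain ⟨hu, hl⟩ := ih (t / |r a|) h1 h2 w' hw'
      constructor
      · rw [rr_cons]
        calc |r a| * rr r w' ≤ |r a| * (t / |r a|) :=
              mul_le_mul_of_nonneg_left hu (abs_nonneg _)
          _ = t := by field_simp
      · rw [rr_cons]
        have : rmin * t = |r a| * (rmin * (t / |r a|)) := by field_simp
        rw [this]
        exact mul_lt_mul_of_pos_left hl hra

lemma sec_head {r : Fin m → ℝ} {n : ℕ} {t : ℝ} {a : Fin m} {w : List (Fin m)}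
    (hw : w ∈ (if |r a| ≤ t then ({[a]} : Finset (List (Fin m)))
      else (sec r n (t / |r a|)).image (a :: ·))) : w.head? = some a := by
  split_ifs at hw
  · rw [Finset.mem_singleton] at hw; subst hw; rfl
  · rw [Finset.mem_image] at hw
    obtain ⟨w', _, rfl⟩ := hw; rfl

lemma sec_sum {r c p : Fin m → ℝ} {μ : Measure ℝ}
    (hr : ∀ a, 0 < |r a| ∧ |r a| < 1) (hp : ∀ a, 0 < p a)
    (hinv : ∀ {A : Set ℝ}, MeasurableSet A →
      μ A = ∑ a, ENNReal.ofReal (p a) * μ ((fun x : ℝ => r a * x + c a) ⁻¹' A))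
    {rmax : ℝ} (hrmax0 : 0 < rmax) (hrmax : ∀ a, |r a| ≤ rmax) :
    ∀ n (t : ℝ), 0 < t → t < 1 → rmax ^ n ≤ t →
      ∀ {A : Set ℝ}, MeasurableSet A →
        μ A = ∑ w ∈ sec r n t, ENNReal.ofReal (pp p w) * μ (Sw r c w ⁻¹' A) := by
  intro n
  induction n with
  | zero =>
    intro t ht ht1 hfuel
    exact absurd (lt_of_le_of_lt (by simpa using hfuel) ht1) (lt_irrefl 1)
  | succ k ih =>
    intro t ht ht1 hfuel A hA
    have hdisj : (↑(Finset.univ : Finset (Fin m)) : Set (Fin m)).PairwiseDisjoint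
        (fun a => if |r a| ≤ t then ({[a]} : Finset (List (Fin m)))
          else (sec r k (t / |r a|)).image (a :: ·)) := by
      intro a _ b _ hab
      simp only [Function.onFun]
      rw [Finset.disjoint_left]
      intro w hwa hwb
      exact hab (Option.some_injective _ ((sec_head hwa).symm.trans (sec_head hwb)))
    have hsec : sec r (k+1) t = Finset.univ.biUnion fun a =>
        if |r a| ≤ t then ({[a]} : Finset (List (Fin m)))
          else (sec r k (t / |r a|)).image (a :: ·) := rfl
    rw [hsec, Finset.sum_biUnion hdisj, hinv hA]
    refine Finset.sum_congr rfl fun a _ => ?_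
    by_cases hle : |r a| ≤ t
    · rw [if_pos hle, Finset.sum_singleton]
      congr 1
      simp [pp]
    · push_neg at hle
      have hra := (hr a).1
      have h1 : 0 < t / |r a| := div_pos ht hra
      have h2 : t / |r a| < 1 := (div_lt_one hra).2 hle
      have h3 : rmax ^ k ≤ t / |r a| := by
        rw [le_div_iff₀ hra]
        calc rmax ^ k * |r a| ≤ rmax ^ k * rmax := by
              have : (0:ℝ) ≤ rmax ^ k := le_of_lt (pow_pos hrmax0 k)
              nlinarith [hrmax a]
          _ = rmax ^ (k+1) := by ring
          _ ≤ t := hfuel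
      rw [if_neg (not_le.2 hle), Finset.sum_image
        (fun x _ y _ h => by simpa using h)]
      have hAa : MeasurableSet ((fun x : ℝ => r a * x + c a) ⁻¹' A) :=
        (by fun_prop : Measurable fun x : ℝ => r a * x + c a) hA
      rw [ih (t / |r a|) h1 h2 h3 hAa, Finset.mul_sum]
      refine Finset.sum_congr rfl fun w hw => ?_
      have hpre : Sw r c (a :: w) ⁻¹' A = Sw r c w ⁻¹' ((fun x : ℝ => r a * x + c a) ⁻¹' A) := by
        rw [show Sw r c (a :: w) = (fun x : ℝ => r a * x + c a) ∘ Sw r c w from rfl,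
          Set.preimage_comp]
      rw [hpre, pp_cons, ENNReal.ofReal_mul (hp a).le, mul_assoc]


lemma exists_sec_support {r c p : Fin m → ℝ} {μ : Measure ℝ}
    (hprob : IsProbabilityMeasure μ) (hp : ∀ a, 0 < p a)
    {n : ℕ} {t : ℝ} {x : ℝ}
    (hsum : ∀ {A : Set ℝ}, MeasurableSet A →
      μ A = ∑ w ∈ sec r n t, ENNReal.ofReal (pp p w) * μ (Sw r c w ⁻¹' A))
    (hx : x ∈ msupport μ) :
    ∃ w ∈ sec r n t, ∀ ε > 0, 0 < μ (Sw r c w ⁻¹' Metric.ball x ε) := by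
  by_contra hcon
  push_neg at hcon
  have key : ∀ w : List (Fin m), ∃ ε : ℝ, 0 < ε ∧
      (w ∈ sec r n t → μ (Sw r c w ⁻¹' Metric.ball x ε) = 0) := by
    intro w
    by_cases hw : w ∈ sec r n t
    · obtain ⟨ε, hε, h0⟩ := hcon w hw
      exact ⟨ε, hε, fun _ => le_antisymm h0 (zero_le)⟩
    · exact ⟨1, one_pos, fun h => absurd h hw⟩
  choose ε hεpos hε0 using key
  have hne : (sec r n t).Nonempty := by
    rcases Finset.eq_empty_or_nonempty (sec r n t) with h | h
    · exfalso
      have := hsum (MeasurableSet.univ)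
      rw [h, Finset.sum_empty] at this
      rw [measure_univ] at this
      exact one_ne_zero this
    · exact h
  set ε₁ : ℝ := (sec r n t).inf' hne ε with hε₁
  have hε₁pos : 0 < ε₁ := by
    rw [hε₁, Finset.lt_inf'_iff]
    exact fun w _ => hεpos w
  have : μ (Metric.ball x ε₁) = 0 := by
    rw [hsum Metric.isOpen_ball.measurableSet]
    refine Finset.sum_eq_zero fun w hw => ?_
    have hsub : Sw r c w ⁻¹' Metric.ball x ε₁ ⊆ Sw r c w ⁻¹' Metric.ball x (ε w) :=
      preimage_mono (Metric.ball_subset_ball (Finset.inf'_le ε hw))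
    have := le_antisymm ((measure_mono hsub).trans (hε0 w hw).le) (zero_le)
    rw [this, mul_zero]
  exact absurd this (ne_of_gt (hx ε₁ hε₁pos))

lemma sec_support_point {r c : Fin m → ℝ} {μ : Measure ℝ}
    (hr : ∀ a, 0 < |r a| ∧ |r a| < 1) {w : List (Fin m)} {x : ℝ}
    (hw : ∀ ε > 0, 0 < μ (Sw r c w ⁻¹' Metric.ball x ε)) :
    ∃ z ∈ msupport μ, Sw r c w z = x := by
  obtain ⟨b, d, hbd, habs⟩ := Sw_affine r c w
  have hb : b ≠ 0 := by
    intro h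
    rw [h, abs_zero] at habs
    exact absurd habs.symm (ne_of_gt (rr_pos hr w))
  refine ⟨(x - d) / b, ?_, ?_⟩
  · intro ε hε
    have h1 := hw (ε * |b|) (mul_pos hε (abs_pos.2 hb))
    rw [hbd, affine_preimage_ball _ _ _ _ hb] at h1
    have : ε * |b| / |b| = ε := by field_simp
    rwa [this] at h1
  · rw [hbd]
    field_simp
    ring

lemma msupport_closed (μ : Measure ℝ) : IsClosed (msupport μ) := by
  rw [← isOpen_compl_iff, Metric.isOpen_iff]
  intro x hx
  simp only [msupport, mem_compl_iff, mem_setOf_eq, not_forall] at hx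
  obtain ⟨ε, hε, h0⟩ := hx
  push_neg at h0
  have h0' : μ (Metric.ball x ε) = 0 := le_antisymm h0 (zero_le)
  refine ⟨ε/2, by linarith, fun y hy => ?_⟩
  simp only [msupport, mem_compl_iff, mem_setOf_eq, not_forall]
  refine ⟨ε/2, by linarith, ?_⟩
  push_neg
  refine le_antisymm ?_ (zero_le) |>.le
  refine (measure_mono ?_).trans h0'.le
  intro z hz
  rw [Metric.mem_ball] at hy hz ⊢
  calc dist z x ≤ dist z y + dist y x := dist_triangle _ _ _
    _ < ε/2 + ε/2 := add_lt_add hz hy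
    _ = ε := by ring

lemma msupport_two_points {μ : Measure ℝ} (hprob : IsProbabilityMeasure μ)
    (hcompl : μ (msupport μ)ᶜ = 0) (hna : ∀ x : ℝ, μ {x} = 0) :
    ∃ u v : ℝ, u ∈ msupport μ ∧ v ∈ msupport μ ∧ u ≠ v := by
  have hmeas : MeasurableSet (msupport μ) := (msupport_closed μ).measurableSet
  have hfull : μ (msupport μ) = 1 := by
    exact (prob_compl_eq_zero_iff hmeas).1 hcompl
  obtain ⟨u, hu⟩ : (msupport μ).Nonempty := by
    rcases Set.eq_empty_or_nonempty (msupport μ) with h | h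
    · rw [h] at hfull; simp at hfull
    · exact h
  by_cases hv : ∃ v ∈ msupport μ, v ≠ u
  · obtain ⟨v, hv, hvu⟩ := hv
    exact ⟨u, v, hu, hv, hvu.symm⟩
  · exfalso
    push_neg at hv
    have hsub : msupport μ ⊆ {u} := fun z hz => hv z hz
    have := (measure_mono hsub).trans_eq (hna u)
    rw [hfull] at this
    exact one_ne_zero (le_antisymm this (zero_le) : (1:ℝ≥0∞) = 0)

lemma ball_disj {x w d ρ δ : ℝ} (hδ : δ = d/5) (hρ : ρ ≤ δ)
    (hcase : d/2 ≤ |x - w|) : Disjoint (Metric.ball x ρ) (Metric.ball w δ) := by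
  rw [Set.disjoint_left]
  intro z hz hz'
  rw [Metric.mem_ball, Real.dist_eq] at hz hz'
  have h1 : |x - w| ≤ |z - x| + |z - w| := by
    calc |x - w| = |(z - w) - (z - x)| := by ring_nf
      _ ≤ |z - w| + |z - x| := abs_sub _ _
      _ = |z - x| + |z - w| := by ring
  have h2 : |z - x| < δ := lt_of_lt_of_le hz hρ
  rw [hδ] at h2 hz'
  have hd0 : 0 < d := by
    rcases lt_trichotomy d 0 with h | h | h
    · exfalso; linarith [abs_nonneg (x - w)]
    · exfalso
      rw [h] at h2
      linarith [abs_nonneg (z - x)]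
    · exact h
  linarith

lemma one_sub_le_ofReal {γ₀ : ℝ≥0∞} {γ : ℝ} (hne : (1:ℝ≥0∞) - γ₀ ≠ ⊤)
    (hγ : ((1:ℝ≥0∞) - γ₀).toReal ≤ γ) : (1:ℝ≥0∞) - γ₀ ≤ ENNReal.ofReal γ := by
  rw [← ENNReal.ofReal_toReal hne]
  exact ENNReal.ofReal_le_ofReal hγ

lemma uniform_small {μ : Measure ℝ} (hprob : IsProbabilityMeasure μ)
    {u v : ℝ} (hu : u ∈ msupport μ) (hv : v ∈ msupport μ) (huv : u ≠ v) :
    ∃ δ γ : ℝ, 0 < δ ∧ 1/2 ≤ γ ∧ γ < 1 ∧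
      ∀ x ρ : ℝ, ρ ≤ δ → μ (Metric.ball x ρ) ≤ ENNReal.ofReal γ := by
  set d : ℝ := |u - v| with hd
  have hd0 : 0 < d := abs_pos.2 (sub_ne_zero.2 huv)
  set δ : ℝ := d / 5 with hδ
  have hδ0 : 0 < δ := by positivity
  set γ₀ : ℝ≥0∞ := min (μ (Metric.ball u δ)) (μ (Metric.ball v δ)) with hγ₀
  have hγ₀pos : 0 < γ₀ := lt_min (hu δ hδ0) (hv δ hδ0)
  set γ : ℝ := max (1 - γ₀).toReal (1/2) with hγ
  have hγne : (1 : ℝ≥0∞) - γ₀ ≠ ⊤ :=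
    ne_top_of_le_ne_top ENNReal.one_ne_top tsub_le_self
  refine ⟨δ, γ, hδ0, le_max_right _ _, ?_, ?_⟩
  · rw [hγ, max_lt_iff]
    constructor
    · have h1 : (1 : ℝ≥0∞) - γ₀ < 1 :=
        ENNReal.sub_lt_self ENNReal.one_ne_top one_ne_zero (ne_of_gt hγ₀pos)
      have := (ENNReal.toReal_lt_toReal hγne ENNReal.one_ne_top).2 h1
      simpa using this
    · norm_num
  · intro x ρ hρ
    have hcases : d/2 ≤ |x - u| ∨ d/2 ≤ |x - v| := by
      by_contra hcon
      push_neg at hcon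
      have h1 : |u - v| ≤ |x - u| + |x - v| := by
        calc |u - v| = |(x - v) - (x - u)| := by ring_nf
          _ ≤ |x - v| + |x - u| := abs_sub _ _
          _ = |x - u| + |x - v| := by ring
      rw [← hd] at h1
      linarith [hcon.1, hcon.2]
    have hofreal : ((1:ℝ≥0∞) - γ₀).toReal ≤ γ := le_max_left _ _
    rcases hcases with hcase | hcase
    · have hdisj := ball_disj hδ hρ hcase
      calc μ (Metric.ball x ρ) ≤ μ (Metric.ball u δ)ᶜ :=
            measure_mono hdisj.subset_compl_right
        _ = 1 - μ (Metric.ball u δ) :=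
            prob_compl_eq_one_sub Metric.isOpen_ball.measurableSet
        _ ≤ 1 - γ₀ := tsub_le_tsub_left (min_le_left _ _) 1
        _ ≤ ENNReal.ofReal γ := one_sub_le_ofReal hγne hofreal
    · have hdisj := ball_disj hδ hρ hcase
      calc μ (Metric.ball x ρ) ≤ μ (Metric.ball v δ)ᶜ :=
            measure_mono hdisj.subset_compl_right
        _ = 1 - μ (Metric.ball v δ) :=
            prob_compl_eq_one_sub Metric.isOpen_ball.measurableSet
        _ ≤ 1 - γ₀ := tsub_le_tsub_left (min_le_right _ _) 1
        _ ≤ ENNReal.ofReal γ := one_sub_le_ofReal hγne hofreal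

lemma step_up {r c p : Fin m → ℝ} {μ : Measure ℝ}
    (hprob : IsProbabilityMeasure μ)
    (hr : ∀ a, 0 < |r a| ∧ |r a| < 1) (hp : ∀ a, 0 < p a)
    (hinv' : ∀ {A : Set ℝ}, MeasurableSet A →
      μ A = ∑ a, ENNReal.ofReal (p a) * μ ((fun x : ℝ => r a * x + c a) ⁻¹' A))
    {rmin rmax : ℝ} (hrmin0 : 0 < rmin) (hrmin : ∀ a, rmin ≤ |r a|)
    (hrmax0 : 0 < rmax) (hrmax : ∀ a, |r a| ≤ rmax) (hrmax1 : rmax < 1)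
    {R : ℝ} (hR1 : 1 ≤ R) (hK : ∀ k ∈ msupport μ, |k| ≤ R)
    (hcompl : μ (msupport μ)ᶜ = 0)
    {δ γ : ℝ} (hδ0 : 0 < δ) (hγ0 : 0 ≤ γ)
    (hsmall : ∀ x ρ : ℝ, ρ ≤ δ → μ (Metric.ball x ρ) ≤ ENNReal.ofReal γ)
    {x ρ : ℝ} (hρ0 : 0 < ρ) (hρδ : ρ < δ * rmin) :
    μ (Metric.ball x ρ) ≤ ENNReal.ofReal γ * μ (Metric.ball x ((1 + 2*R/(δ*rmin)) * ρ)) := by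
  classical
  set t : ℝ := ρ / (δ * rmin) with ht
  have hδr : 0 < δ * rmin := mul_pos hδ0 hrmin0
  have ht0 : 0 < t := div_pos hρ0 hδr
  have ht1 : t < 1 := (div_lt_one hδr).2 hρδ
  obtain ⟨n, hn⟩ := exists_pow_lt_of_lt_one ht0 hrmax1
  have hsum : ∀ {A : Set ℝ}, MeasurableSet A →
      μ A = ∑ w ∈ sec r n t, ENNReal.ofReal (pp p w) * μ (Sw r c w ⁻¹' A) :=
    fun {A} hA => sec_sum hr hp hinv' hrmax0 hrmax n t ht0 ht1 hn.le hA
  have hmem := sec_mem hr hrmin0 hrmin n t ht0 ht1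
  have hfull : μ (msupport μ) = 1 :=
    (prob_compl_eq_zero_iff (msupport_closed μ).measurableSet).1 hcompl
  set F : Finset (List (Fin m)) := sec r n t with hF
  set W : Finset (List (Fin m)) :=
    F.filter (fun w => μ (Sw r c w ⁻¹' Metric.ball x ρ) ≠ 0) with hW
  have hWF : W ⊆ F := Finset.filter_subset _ _
  set Big : ℝ := (1 + 2*R/(δ*rmin)) * ρ with hBig
  -- each inner preimage of the small ball: measure ≤ γ
  have hinner : ∀ w ∈ F, μ (Sw r c w ⁻¹' Metric.ball x ρ) ≤ ENNReal.ofReal γ := by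
    intro w hw
    obtain ⟨b, d, hbd, habs⟩ := Sw_affine r c w
    have hb : b ≠ 0 := fun h => by
      rw [h, abs_zero] at habs
      exact absurd habs.symm (ne_of_gt (rr_pos hr w))
    rw [hbd, affine_preimage_ball _ _ _ _ hb]
    refine hsmall _ _ ?_
    rw [habs]
    obtain ⟨hu, hl⟩ := hmem w hw
    have h1 : ρ / rr r w ≤ ρ / (rmin * t) := by
      apply div_le_div_of_nonneg_left hρ0.le (mul_pos hrmin0 ht0) hl.le
    refine h1.trans (le_of_eq ?_)
    rw [ht]
    rw [div_eq_iff (by positivity : rmin * (ρ / (δ * rmin)) ≠ 0)]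
    field_simp

  -- each contributing preimage of the big ball has full measure
  have houter : ∀ w ∈ W, μ (Sw r c w ⁻¹' Metric.ball x Big) = 1 := by
    intro w hw
    rw [hW, Finset.mem_filter] at hw
    obtain ⟨hwF, hwne⟩ := hw
    -- find a support point in the preimage of the small ball
    have hnonempty : (Sw r c w ⁻¹' Metric.ball x ρ ∩ msupport μ).Nonempty := by
      rcases Set.eq_empty_or_nonempty (Sw r c w ⁻¹' Metric.ball x ρ ∩ msupport μ) with h | h
      · exfalso
        apply hwne
        have hsub : Sw r c w ⁻¹' Metric.ball x ρ ⊆ (msupport μ)ᶜ := by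
          intro z hz hz'
          exact Set.eq_empty_iff_forall_notMem.1 h z ⟨hz, hz'⟩
        exact le_antisymm ((measure_mono hsub).trans hcompl.le) (zero_le)
      · exact h
    obtain ⟨k0, hk0pre, hk0K⟩ := hnonempty
    obtain ⟨b, d, hbd, habs⟩ := Sw_affine r c w
    obtain ⟨hu, hl⟩ := hmem w hwF
    have hsub : msupport μ ⊆ Sw r c w ⁻¹' Metric.ball x Big := by
      intro k hk
      rw [Set.mem_preimage, Metric.mem_ball, Real.dist_eq]
      have h1 : |Sw r c w k - Sw r c w k0| ≤ t * (2*R) := by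
        rw [hbd]
        have : b * k + d - (b * k0 + d) = b * (k - k0) := by ring
        simp only
        rw [this, abs_mul, habs]
        have h2 : |k - k0| ≤ 2 * R := by
          have := hK k hk
          have := hK k0 hk0K
          have := abs_sub_abs_le_abs_sub k k0
          have h3 : |k - k0| ≤ |k| + |k0| := abs_sub _ _
          linarith
        calc rr r w * |k - k0| ≤ t * |k - k0| :=
              mul_le_mul_of_nonneg_right hu (abs_nonneg _)
          _ ≤ t * (2 * R) := mul_le_mul_of_nonneg_left h2 ht0.le
      have h2 : |Sw r c w k0 - x| < ρ := by
        rw [Set.mem_preimage, Metric.mem_ball, Real.dist_eq] at hk0pre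
        exact hk0pre
      have h3 : |Sw r c w k - x| ≤ |Sw r c w k - Sw r c w k0| + |Sw r c w k0 - x| := by
        calc |Sw r c w k - x| = |(Sw r c w k - Sw r c w k0) + (Sw r c w k0 - x)| := by ring_nf
          _ ≤ _ := abs_add_le _ _
      have h4 : t * (2*R) = 2*R/(δ*rmin) * ρ := by rw [ht]; field_simp
      calc |Sw r c w k - x| ≤ t * (2*R) + |Sw r c w k0 - x| := by linarith
        _ < 2*R/(δ*rmin) * ρ + ρ := by rw [h4]; linarith
        _ = Big := by rw [hBig]; ring
    refine le_antisymm prob_le_one ?_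
    calc (1:ℝ≥0∞) = μ (msupport μ) := hfull.symm
      _ ≤ μ (Sw r c w ⁻¹' Metric.ball x Big) := measure_mono hsub
  -- put it together
  calc μ (Metric.ball x ρ)
      = ∑ w ∈ F, ENNReal.ofReal (pp p w) * μ (Sw r c w ⁻¹' Metric.ball x ρ) :=
        hsum Metric.isOpen_ball.measurableSet
    _ = ∑ w ∈ W, ENNReal.ofReal (pp p w) * μ (Sw r c w ⁻¹' Metric.ball x ρ) := by
        refine (Finset.sum_subset hWF ?_).symm
        intro w hwF hwW
        rw [hW, Finset.mem_filter] at hwW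
        push_neg at hwW
        rw [hwW hwF, mul_zero]
    _ ≤ ∑ w ∈ W, ENNReal.ofReal (pp p w) * ENNReal.ofReal γ :=
        Finset.sum_le_sum fun w hw => mul_le_mul_right (hinner w (hWF hw)) _
    _ = ENNReal.ofReal γ * ∑ w ∈ W, ENNReal.ofReal (pp p w) * μ (Sw r c w ⁻¹' Metric.ball x Big) := by
        rw [Finset.mul_sum]
        refine Finset.sum_congr rfl fun w hw => ?_
        rw [houter w hw, mul_one, mul_comm]
    _ ≤ ENNReal.ofReal γ * ∑ w ∈ F, ENNReal.ofReal (pp p w) * μ (Sw r c w ⁻¹' Metric.ball x Big) :=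
        mul_le_mul_right (Finset.sum_le_sum_of_subset hWF) _
    _ = ENNReal.ofReal γ * μ (Metric.ball x Big) := by
        rw [← hsum Metric.isOpen_ball.measurableSet]

lemma iter_up {r c p : Fin m → ℝ} {μ : Measure ℝ}
    (hprob : IsProbabilityMeasure μ)
    (hr : ∀ a, 0 < |r a| ∧ |r a| < 1) (hp : ∀ a, 0 < p a)
    (hinv' : ∀ {A : Set ℝ}, MeasurableSet A →
      μ A = ∑ a, ENNReal.ofReal (p a) * μ ((fun x : ℝ => r a * x + c a) ⁻¹' A))
    {rmin rmax : ℝ} (hrmin0 : 0 < rmin) (hrmin : ∀ a, rmin ≤ |r a|) (hrmin1 : rmin ≤ 1)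
    (hrmax0 : 0 < rmax) (hrmax : ∀ a, |r a| ≤ rmax) (hrmax1 : rmax < 1)
    {R : ℝ} (hR1 : 1 ≤ R) (hK : ∀ k ∈ msupport μ, |k| ≤ R)
    (hcompl : μ (msupport μ)ᶜ = 0)
    {δ γ : ℝ} (hδ0 : 0 < δ) (hγ0 : 0 ≤ γ)
    (hsmall : ∀ x ρ : ℝ, ρ ≤ δ → μ (Metric.ball x ρ) ≤ ENNReal.ofReal γ) :
    ∀ k : ℕ, ∀ x ρ : ℝ, 0 < ρ → ρ ≤ δ * rmin / (1 + 2*R/(δ*rmin)) ^ (k+1) →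
      μ (Metric.ball x ρ) ≤ ENNReal.ofReal (γ ^ (k+1)) := by
  have hδr : 0 < δ * rmin := mul_pos hδ0 hrmin0
  have hCst1 : 1 < 1 + 2*R/(δ*rmin) := by
    have : 0 < 2*R/(δ*rmin) := by positivity
    linarith
  set Cst : ℝ := 1 + 2*R/(δ*rmin) with hCst
  have hCst0 : 0 < Cst := lt_trans one_pos hCst1
  intro k
  induction k with
  | zero =>
    intro x ρ hρ0 hρ
    rw [pow_one]
    refine hsmall x ρ ?_
    have e : Cst ^ (0+1) = Cst := by norm_num
    rw [e] at hρ
    have h1 : δ * rmin / Cst < δ * rmin := div_lt_self hδr hCst1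
    have h2 : δ * rmin ≤ δ := mul_le_of_le_one_right hδ0.le hrmin1
    linarith
  | succ k ih =>
    intro x ρ hρ0 hρ
    have hpow : (1:ℝ) < Cst ^ (k+2) := one_lt_pow₀ hCst1 (by norm_num)
    have hρδ : ρ < δ * rmin := by
      have h1 : δ * rmin / Cst ^ (k+2) < δ * rmin := by
        rw [div_lt_iff₀ (pow_pos hCst0 _)]
        nlinarith [hδr]
      exact lt_of_le_of_lt hρ h1
    have hstep := step_up (x := x) hprob hr hp hinv' hrmin0 hrmin hrmax0 hrmax hrmax1
      hR1 hK hcompl hδ0 hγ0 hsmall hρ0 hρδ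
    have hCstρ : Cst * ρ ≤ δ * rmin / Cst ^ (k+1) := by
      have h2 : Cst * (δ * rmin / Cst ^ (k+2)) = δ * rmin / Cst ^ (k+1) := by
        field_simp
        ring
      calc Cst * ρ ≤ Cst * (δ * rmin / Cst ^ (k+2)) :=
            mul_le_mul_of_nonneg_left hρ hCst0.le
        _ = δ * rmin / Cst ^ (k+1) := h2
    have hIH := ih x (Cst * ρ) (mul_pos hCst0 hρ0) hCstρ
    calc μ (Metric.ball x ρ) ≤ ENNReal.ofReal γ * μ (Metric.ball x (Cst * ρ)) := hstep
      _ ≤ ENNReal.ofReal γ * ENNReal.ofReal (γ ^ (k+1)) := mul_le_mul_right hIH _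
      _ = ENNReal.ofReal (γ ^ (k+2)) := by
          rw [← ENNReal.ofReal_mul hγ0]
          congr 1
          ring

lemma pp_ge_rpow {r p : Fin m → ℝ} (hr : ∀ a, 0 < |r a| ∧ |r a| < 1)
    (hp : ∀ a, 0 < p a) {s : ℝ} (hs0 : 0 ≤ s) (hsa : ∀ a, |r a| ^ s ≤ p a) :
    ∀ w : List (Fin m), (rr r w) ^ s ≤ pp p w := by
  intro w
  induction w with
  | nil => simp [Real.one_rpow]
  | cons a w ih =>
    rw [rr_cons, pp_cons, Real.mul_rpow (abs_nonneg _) (rr_pos hr w).le]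
    exact mul_le_mul (hsa a) ih (Real.rpow_nonneg (rr_pos hr w).le s) (hp a).le

lemma frostman_low {r c p : Fin m → ℝ} {μ : Measure ℝ}
    (hprob : IsProbabilityMeasure μ)
    (hr : ∀ a, 0 < |r a| ∧ |r a| < 1) (hp : ∀ a, 0 < p a)
    (hinv' : ∀ {A : Set ℝ}, MeasurableSet A →
      μ A = ∑ a, ENNReal.ofReal (p a) * μ ((fun x : ℝ => r a * x + c a) ⁻¹' A))
    {rmin rmax : ℝ} (hrmin0 : 0 < rmin) (hrmin : ∀ a, rmin ≤ |r a|)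
    (hrmax0 : 0 < rmax) (hrmax : ∀ a, |r a| ≤ rmax) (hrmax1 : rmax < 1)
    {R : ℝ} (hR1 : 1 ≤ R) (hK : ∀ k ∈ msupport μ, |k| ≤ R)
    (hcompl : μ (msupport μ)ᶜ = 0)
    {s : ℝ} (hs0 : 0 ≤ s) (hsa : ∀ a, |r a| ^ s ≤ p a) :
    ∀ x ∈ msupport μ, ∀ ρ : ℝ, 0 < ρ → ρ ≤ 1 →
      ENNReal.ofReal ((rmin * (ρ/(4*R))) ^ s) ≤ μ (Metric.ball x ρ) := by
  intro x hx ρ hρ0 hρ1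
  set t : ℝ := ρ / (4*R) with ht
  have ht0 : 0 < t := by positivity
  have ht1 : t < 1 := by
    rw [ht, div_lt_one (by positivity)]
    linarith
  obtain ⟨n, hn⟩ := exists_pow_lt_of_lt_one ht0 hrmax1
  have hsum : ∀ {A : Set ℝ}, MeasurableSet A →
      μ A = ∑ w ∈ sec r n t, ENNReal.ofReal (pp p w) * μ (Sw r c w ⁻¹' A) :=
    fun {A} hA => sec_sum hr hp hinv' hrmax0 hrmax n t ht0 ht1 hn.le hA
  have hmem := sec_mem hr hrmin0 hrmin n t ht0 ht1
  obtain ⟨w, hwF, hwpos⟩ := exists_sec_support hprob hp hsum hx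
  obtain ⟨z, hzK, hzx⟩ := sec_support_point hr hwpos
  obtain ⟨hu, hl⟩ := hmem w hwF
  obtain ⟨b, d, hbd, habs⟩ := Sw_affine r c w
  have hsub : msupport μ ⊆ Sw r c w ⁻¹' Metric.ball x ρ := by
    intro k hk
    rw [Set.mem_preimage, Metric.mem_ball, Real.dist_eq]
    have h1 : Sw r c w k - x = b * (k - z) := by
      rw [← hzx, hbd]; simp only; ring
    rw [h1, abs_mul, habs]
    have h2 : |k - z| ≤ 2 * R := by
      have hk1 := hK k hk
      have hk2 := hK z hzK
      have h3 : |k - z| ≤ |k| + |z| := abs_sub _ _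
      linarith
    calc rr r w * |k - z| ≤ t * (2*R) := by
          have := rr_pos hr w
          nlinarith
      _ = ρ / 2 := by rw [ht]; field_simp; ring
      _ < ρ := by linarith
  have hfull : μ (msupport μ) = 1 :=
    (prob_compl_eq_zero_iff (msupport_closed μ).measurableSet).1 hcompl
  have hfull1 : μ (Sw r c w ⁻¹' Metric.ball x ρ) = 1 :=
    le_antisymm prob_le_one (hfull ▸ measure_mono hsub)
  calc ENNReal.ofReal ((rmin * (ρ/(4*R))) ^ s)
      ≤ ENNReal.ofReal (pp p w) := by
        apply ENNReal.ofReal_le_ofReal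
        refine le_trans ?_ (pp_ge_rpow hr hp hs0 hsa w)
        rw [← ht]
        exact Real.rpow_le_rpow (by positivity) hl.le hs0
    _ = ENNReal.ofReal (pp p w) * μ (Sw r c w ⁻¹' Metric.ball x ρ) := by
        rw [hfull1, mul_one]
    _ ≤ ∑ w' ∈ sec r n t, ENNReal.ofReal (pp p w') * μ (Sw r c w' ⁻¹' Metric.ball x ρ) :=
        Finset.single_le_sum
          (f := fun w' => ENNReal.ofReal (pp p w') * μ (Sw r c w' ⁻¹' Metric.ball x ρ))
          (fun _ _ => zero_le) hwF
    _ = μ (Metric.ball x ρ) := (hsum Metric.isOpen_ball.measurableSet).symm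

/-- Frostman-type bounds for a self-similar measure: there are `0 < s_F ≤ s_M < ∞` and
`C ≥ 1` with `μ(x−r, x+r) ≥ C⁻¹ r^{s_M}` for `x` in the support and
`μ(y−r, y+r) ≤ C r^{s_F}` for all `y`, whenever `0 < r ≤ 1`. -/
theorem stmt17 (m : ℕ) (hm : 0 < m) (r c p : Fin m → ℝ)
    (hr : ∀ a, 0 < |r a| ∧ |r a| < 1) (hp : ∀ a, 0 < p a) (hpsum : ∑ a, p a = 1)
    (μ : Measure ℝ) (hprob : IsProbabilityMeasure μ) (hna : ∀ x : ℝ, μ {x} = 0)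
    (hinv : μ = ∑ a, ENNReal.ofReal (p a) • Measure.map (fun x : ℝ => r a * x + c a) μ) :
    ∃ (sF sM C : ℝ), 0 < sF ∧ sF ≤ sM ∧ 1 ≤ C ∧
      (∀ x ∈ msupport μ, ∀ ρ : ℝ, 0 < ρ → ρ ≤ 1 →
        ENNReal.ofReal (C⁻¹ * ρ ^ sM) ≤ μ (Set.Ioo (x - ρ) (x + ρ))) ∧
      (∀ y : ℝ, ∀ ρ : ℝ, 0 < ρ → ρ ≤ 1 →
        μ (Set.Ioo (y - ρ) (y + ρ)) ≤ ENNReal.ofReal (C * ρ ^ sF)) := by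
  classical
  haveI := hprob
  haveI : Nonempty (Fin m) := ⟨⟨0, hm⟩⟩
  obtain ⟨a0⟩ : Nonempty (Fin m) := inferInstance
  -- basic constants
  set rmin : ℝ := Finset.univ.inf' Finset.univ_nonempty (fun a => |r a|) with hrmindef
  set rmax : ℝ := Finset.univ.sup' Finset.univ_nonempty (fun a => |r a|) with hrmaxdef
  set pmin : ℝ := Finset.univ.inf' Finset.univ_nonempty p with hpmindef
  have hrmin : ∀ a, rmin ≤ |r a| := fun a => by
    rw [hrmindef]; exact Finset.inf'_le (fun a => |r a|) (Finset.mem_univ a)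
  have hrmax : ∀ a, |r a| ≤ rmax := fun a => by
    rw [hrmaxdef]; exact Finset.le_sup' (fun a => |r a|) (Finset.mem_univ a)
  have hpmin : ∀ a, pmin ≤ p a := fun a => by
    rw [hpmindef]; exact Finset.inf'_le p (Finset.mem_univ a)
  have hrmin0 : 0 < rmin := by
    rw [hrmindef, Finset.lt_inf'_iff]
    exact fun a _ => (hr a).1
  have hrmax1 : rmax < 1 := by
    rw [hrmaxdef]
    exact (Finset.sup'_lt_iff Finset.univ_nonempty).2 fun a _ => (hr a).2
  have hrmax0 : 0 < rmax := lt_of_lt_of_le (hr a0).1 (hrmax a0)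
  have hrmin1 : rmin ≤ 1 := (hrmin a0).trans (hr a0).2.le
  have hpmin0 : 0 < pmin := by
    rw [hpmindef, Finset.lt_inf'_iff]
    exact fun a _ => hp a
  have hpmin1 : pmin ≤ 1 := by
    have h1 : p a0 ≤ ∑ a, p a := Finset.single_le_sum (fun i _ => (hp i).le) (Finset.mem_univ a0)
    rw [hpsum] at h1
    exact (hpmin a0).trans h1
  -- invariance in pointwise form
  have hinv' : ∀ {A : Set ℝ}, MeasurableSet A →
      μ A = ∑ a, ENNReal.ofReal (p a) * μ ((fun x : ℝ => r a * x + c a) ⁻¹' A) :=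
    fun {A} hA => hinv_apply hinv hA
  -- bounded support
  obtain ⟨R₀, hR₀1, hR₀null⟩ := supp_bdd hm hr hp hpsum hprob hinv
  set R : ℝ := R₀ + 1 with hRdef
  have hR1 : (1:ℝ) ≤ R := by linarith
  have hK : ∀ k ∈ msupport μ, |k| ≤ R := by
    intro k hk
    by_contra hcon
    push_neg at hcon
    have hsub : Metric.ball k 1 ⊆ {x : ℝ | R₀ < |x|} := by
      intro z hz
      rw [Metric.mem_ball, Real.dist_eq] at hz
      have h1 : |k| - |z| ≤ |k - z| := by
        have := abs_sub_abs_le_abs_sub k z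
        linarith [this]
      simp only [mem_setOf_eq]
      have h2 : |k - z| = |z - k| := abs_sub_comm _ _
      rw [hRdef] at hcon
      linarith
    have := (measure_mono hsub).trans hR₀null.le
    exact absurd (le_antisymm this (zero_le)) (ne_of_gt (hk 1 one_pos))
  have hcompl : μ (msupport μ)ᶜ = 0 := msupport_compl_null μ
  -- two support points and the uniform smallness bound
  obtain ⟨u, v, hu, hv, huv⟩ := msupport_two_points hprob hcompl hna
  obtain ⟨δ, γ, hδ0, hγhalf, hγ1, hsmall⟩ := uniform_small hprob hu hv huv
  have hγ0 : (0:ℝ) < γ := lt_of_lt_of_le (by norm_num) hγhalf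
  -- main constants
  set β : ℝ := δ * rmin with hβdef
  have hβ0 : 0 < β := mul_pos hδ0 hrmin0
  set Cst : ℝ := 1 + 2*R/(δ*rmin) with hCstdef
  have hCst1 : 1 < Cst := by
    rw [hCstdef]
    have : 0 < 2*R/(δ*rmin) := by positivity
    linarith
  have hCst0 : 0 < Cst := lt_trans one_pos hCst1
  have hlogCst : 0 < Real.log Cst := Real.log_pos hCst1
  have hloginvγ : 0 < Real.log γ⁻¹ := by
    rw [Real.log_inv]
    linarith [Real.log_neg hγ0 hγ1]
  set sF : ℝ := Real.log γ⁻¹ / Real.log Cst with hsFdef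
  have hsF0 : 0 < sF := div_pos hloginvγ hlogCst
  have hCstsF : Cst ^ sF = γ⁻¹ := by
    rw [Real.rpow_def_of_pos hCst0, hsFdef]
    have h1 : Real.log Cst * (Real.log γ⁻¹ / Real.log Cst) = Real.log γ⁻¹ := by
      rw [mul_comm, div_mul_cancel₀ _ (ne_of_gt hlogCst)]
    rw [h1, Real.exp_log (inv_pos.2 hγ0)]
  set sM₀ : ℝ := Real.log pmin / Real.log rmax with hsM₀def
  have hlogrmax : Real.log rmax < 0 := Real.log_neg hrmax0 hrmax1
  have hsM₀0 : 0 ≤ sM₀ := by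
    rw [hsM₀def]
    exact div_nonneg_of_nonpos (Real.log_nonpos hpmin0.le hpmin1) hlogrmax.le
  have hrmaxsM₀ : rmax ^ sM₀ = pmin := by
    rw [Real.rpow_def_of_pos hrmax0, hsM₀def]
    have h1 : Real.log rmax * (Real.log pmin / Real.log rmax) = Real.log pmin := by
      rw [mul_comm, div_mul_cancel₀ _ (ne_of_lt hlogrmax)]
    rw [h1, Real.exp_log hpmin0]
  have hsa : ∀ a, |r a| ^ sM₀ ≤ pmin := by
    intro a
    rw [← hrmaxsM₀]
    exact Real.rpow_le_rpow (abs_nonneg _) (hrmax a) hsM₀0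
  set sM : ℝ := max sM₀ sF with hsMdef
  have hsFsM : sF ≤ sM := le_max_right _ _
  -- the constant C
  set ε₁ : ℝ := min (β/Cst) 1 with hε₁def
  have hε₁0 : 0 < ε₁ := lt_min (by positivity) one_pos
  set C₁ : ℝ := (ε₁ ^ sF)⁻¹ with hC₁def
  set C₂ : ℝ := (β ^ sF * γ)⁻¹ with hC₂def
  set C₃ : ℝ := ((rmin / (4*R)) ^ sM₀)⁻¹ with hC₃def
  have hC₁0 : 0 < C₁ := by rw [hC₁def]; positivity
  have hC₂0 : 0 < C₂ := by
    rw [hC₂def]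
    have : 0 < β ^ sF := Real.rpow_pos_of_pos hβ0 sF
    positivity
  have hC₃0 : 0 < C₃ := by
    rw [hC₃def]
    have : 0 < (rmin / (4*R)) ^ sM₀ := Real.rpow_pos_of_pos (by positivity) sM₀
    positivity
  set C : ℝ := max 1 (max C₁ (max C₂ C₃)) with hCdef
  have hC1 : (1:ℝ) ≤ C := le_max_left _ _
  have hC0 : (0:ℝ) < C := lt_of_lt_of_le one_pos hC1
  have hCC₁ : C₁ ≤ C := le_trans (le_max_left _ _) (le_max_right _ _)
  have hCC₂ : C₂ ≤ C := le_trans (le_trans (le_max_left _ _) (le_max_right _ _)) (le_max_right _ _)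
  have hCC₃ : C₃ ≤ C := le_trans (le_trans (le_max_right _ _) (le_max_right _ _)) (le_max_right _ _)
  -- the iterated upper bound
  have hiter := iter_up hprob hr hp hinv' hrmin0 hrmin hrmin1 hrmax0 hrmax hrmax1
    hR1 hK hcompl hδ0 hγ0.le hsmall
  refine ⟨sF, sM, C, hsF0, hsFsM, hC1, ?_, ?_⟩
  · -- lower bound
    intro x hx ρ hρ0 hρ1
    rw [← Real.ball_eq_Ioo]
    have hlow := frostman_low hprob hr hp hinv' hrmin0 hrmin hrmax0 hrmax hrmax1
      hR1 hK hcompl hsM₀0 (fun a => (hsa a).trans (hpmin a)) x hx ρ hρ0 hρ1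
    refine le_trans (ENNReal.ofReal_le_ofReal ?_) hlow
    have e1 : rmin * (ρ/(4*R)) = (rmin/(4*R)) * ρ := by ring
    rw [e1, Real.mul_rpow (by positivity) hρ0.le]
    have h2 : ρ ^ sM ≤ ρ ^ sM₀ :=
      Real.rpow_le_rpow_of_exponent_ge hρ0 hρ1 (le_max_left _ _)
    have h3 : C⁻¹ ≤ (rmin/(4*R)) ^ sM₀ := by
      rw [← inv_inv ((rmin/(4*R)) ^ sM₀)]
      exact inv_anti₀ hC₃0 hCC₃
    calc C⁻¹ * ρ ^ sM ≤ (rmin/(4*R)) ^ sM₀ * ρ ^ sM :=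
          mul_le_mul_of_nonneg_right h3 (Real.rpow_nonneg hρ0.le _)
      _ ≤ (rmin/(4*R)) ^ sM₀ * ρ ^ sM₀ :=
          mul_le_mul_of_nonneg_left h2 (Real.rpow_nonneg (by positivity) _)
  · -- upper bound
    intro y ρ hρ0 hρ1
    rw [← Real.ball_eq_Ioo]
    by_cases hcase : ρ < β / Cst
    · -- find the right scale
      have hex : ∃ j : ℕ, β / Cst ^ (j+1) < ρ := by
        obtain ⟨n, hn⟩ := exists_pow_lt_of_lt_one (div_pos hρ0 hβ0) (by
          rw [one_div]
          exact inv_lt_one_of_one_lt₀ hCst1 : 1/Cst < 1)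
        refine ⟨n, ?_⟩
        have h1 : (1/Cst) ^ (n+1) ≤ (1/Cst) ^ n := by
          apply pow_le_pow_of_le_one (by positivity) ?_ (Nat.le_succ n)
          rw [one_div]
          exact inv_le_one_of_one_le₀ hCst1.le
        have h2 : (1/Cst) ^ (n+1) < ρ / β := lt_of_le_of_lt h1 hn
        rw [div_pow, one_pow, div_lt_div_iff₀ (by positivity) hβ0] at h2
        rw [div_lt_iff₀ (by positivity)]
        linarith [h2]
      set j : ℕ := Nat.find hex with hjdef
      have hj : β / Cst ^ (j+1) < ρ := Nat.find_spec hex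
      have hjne : j ≠ 0 := by
        intro h0
        rw [hjdef] at h0
        have := Nat.find_spec hex
        rw [hjdef, h0] at hj
        simp only [zero_add, pow_one] at hj
        linarith
      obtain ⟨k, hk⟩ := Nat.exists_eq_succ_of_ne_zero hjne
      have hkmin : ¬ (β / Cst ^ (k+1) < ρ) := by
        have := Nat.find_min hex (m := k) (by omega)
        exact this
      push_neg at hkmin
      have hbound := hiter k y ρ hρ0 (by exact hkmin)
      have hjk : k + 1 = j := hk.symm
      rw [hjk] at hbound
      refine hbound.trans (ENNReal.ofReal_le_ofReal ?_)
      -- γ ^ j ≤ C * ρ ^ sF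
      have hpowid : ((Cst ^ (j+1) : ℝ)) ^ sF = (γ⁻¹) ^ (j+1) := by
        rw [← Real.rpow_natCast Cst (j+1), ← Real.rpow_mul hCst0.le, mul_comm,
          Real.rpow_mul (by positivity : (0:ℝ) ≤ Cst), hCstsF, Real.rpow_natCast]
      have hrpow : (β / Cst ^ (j+1)) ^ sF = β ^ sF * γ ^ (j+1) := by
        rw [Real.div_rpow hβ0.le (by positivity), hpowid, inv_pow, div_eq_mul_inv, inv_inv]
      have hmono : (β / Cst ^ (j+1)) ^ sF ≤ ρ ^ sF :=
        Real.rpow_le_rpow (by positivity) hj.le hsF0.le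
      have hgj : γ ^ j = C₂ * (β ^ sF * γ ^ (j+1)) := by
        rw [hC₂def, pow_succ]
        have hβsF : (0:ℝ) < β ^ sF := Real.rpow_pos_of_pos hβ0 sF
        field_simp
      calc γ ^ j = C₂ * (β / Cst ^ (j+1)) ^ sF := by rw [hrpow, hgj]
        _ ≤ C₂ * ρ ^ sF := mul_le_mul_of_nonneg_left hmono hC₂0.le
        _ ≤ C * ρ ^ sF := mul_le_mul_of_nonneg_right hCC₂ (Real.rpow_nonneg hρ0.le _)
    · -- large ρ: trivial bound
      push_neg at hcase
      have h1 : (1:ℝ) ≤ C * ρ ^ sF := by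
        have hρε : ε₁ ≤ ρ := le_trans (min_le_left _ _) hcase
        have h2 : ε₁ ^ sF ≤ ρ ^ sF := Real.rpow_le_rpow hε₁0.le hρε hsF0.le
        have h3 : (0:ℝ) < ε₁ ^ sF := Real.rpow_pos_of_pos hε₁0 sF
        calc (1:ℝ) = C₁ * ε₁ ^ sF := by rw [hC₁def]; field_simp
          _ ≤ C * ρ ^ sF := mul_le_mul hCC₁ h2 h3.le hC0.le
      calc μ (Metric.ball y ρ) ≤ 1 := prob_le_one
        _ ≤ ENNReal.ofReal (C * ρ ^ sF) := ENNReal.one_le_ofReal.2 h1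
end

section
/- Define h(x) = exp(−exp(x^{−2})) for x ≠ 0 and h(0) = 0, and f(x) = x + h(x). Let 0 < c < 1 and d ≥ 0, and let λ(x) = c x + d. Let g : [0, f(1)] → [0,1] be the inverse of the restriction of f to [0,1] (f is strictly increasing on [0,1]). Then the set {y ∈ [0, f(1)] : (f ∘ λ ∘ g)''(y) = 0} is finite. -/
open MeasureTheory Filter Set
open scoped ENNReal NNReal

/-- `h(x) = exp(−exp(x^{−2}))` for `x ≠ 0`, and `h(0) = 0`. -/
noncomputable def h19 (x : ℝ) : ℝ :=
  if x = 0 then 0 else Real.exp (-Real.exp (1 / x ^ 2))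

/-- `f(x) = x + h(x)`. -/
noncomputable def f19 (x : ℝ) : ℝ := x + h19 x

noncomputable def E19 (x : ℝ) : ℝ := Real.exp (1 / x ^ 2)

noncomputable def ah1 (x : ℝ) : ℝ := 2 * E19 x * Real.exp (-E19 x) / x ^ 3

noncomputable def ah2 (x : ℝ) : ℝ :=
  2 * E19 x * Real.exp (-E19 x) / x ^ 6 * (2 * E19 x - 2 - 3 * x ^ 2)

noncomputable def ah3 (x : ℝ) : ℝ :=
  (2 * Real.exp (-E19 x) * (-2 * E19 x / x ^ 3) * (1 - E19 x) / x ^ 6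
      - 12 * E19 x * Real.exp (-E19 x) / x ^ 7) * (2 * E19 x - 2 - 3 * x ^ 2)
    + 2 * E19 x * Real.exp (-E19 x) / x ^ 6 * (-4 * E19 x / x ^ 3 - 6 * x)

lemma hasDerivAt_E19 {x : ℝ} (hx : x ≠ 0) :
    HasDerivAt E19 (E19 x * (-2 / x ^ 3)) x := by
  have h1 : HasDerivAt (fun x : ℝ => 1 / x ^ 2) (-2 / x ^ 3) x := by
    have h := ((hasDerivAt_pow 2 x).div_const (1 : ℝ)).inv (by positivity)
    simp only [pow_one, Nat.cast_ofNat, div_one] at h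
    have h2 : (fun x : ℝ => 1 / x ^ 2) = (fun x => x ^ 2)⁻¹ := by funext y; simp [one_div]
    rw [h2]
    refine h.congr_deriv ?_
    have h21 : (2:ℕ) - 1 = 1 := rfl
    rw [h21, pow_one, div_eq_div_iff (by positivity) (by positivity)]
    ring
  exact h1.exp

lemma hasDerivAt_h19 {x : ℝ} (hx : x ≠ 0) : HasDerivAt h19 (ah1 x) x := by
  have hev : h19 =ᶠ[nhds x] fun x => Real.exp (-E19 x) := by
    filter_upwards [isOpen_ne.mem_nhds hx] with y hy
    simp [h19, hy, E19]
  have h : HasDerivAt (fun x => Real.exp (-E19 x))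
      (Real.exp (-E19 x) * -(E19 x * (-2 / x ^ 3))) x :=
    ((hasDerivAt_E19 hx).neg).exp
  refine (h.congr_of_eventuallyEq hev).congr_deriv ?_
  unfold ah1
  field_simp

lemma hasDerivAt_ah1 {x : ℝ} (hx : x ≠ 0) : HasDerivAt ah1 (ah2 x) x := by
  have hE := hasDerivAt_E19 hx
  have h : HasDerivAt (fun x => 2 * E19 x * Real.exp (-E19 x) / x ^ 3)
      (((2 * (E19 x * (-2 / x ^ 3)) * Real.exp (-E19 x)
          + 2 * E19 x * (Real.exp (-E19 x) * -(E19 x * (-2 / x ^ 3)))) * x ^ 3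
        - 2 * E19 x * Real.exp (-E19 x) * (3 * x ^ 2)) / (x ^ 3) ^ 2) x := by
    have hnum : HasDerivAt (fun x => 2 * E19 x * Real.exp (-E19 x))
        (2 * (E19 x * (-2 / x ^ 3)) * Real.exp (-E19 x)
          + 2 * E19 x * (Real.exp (-E19 x) * -(E19 x * (-2 / x ^ 3)))) x :=
      ((hE.const_mul 2).mul (hE.neg.exp))
    have hden : HasDerivAt (fun x : ℝ => x ^ 3) ((3 : ℕ) * x ^ 2) x := by
      simpa using hasDerivAt_pow 3 x
    have := hnum.div hden (by positivity)
    simp only [Nat.cast_ofNat] at this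
    exact this
  refine h.congr_deriv ?_
  unfold ah2
  field_simp
  ring

lemma hasDerivAt_ah2 {x : ℝ} (hx : x ≠ 0) : HasDerivAt ah2 (ah3 x) x := by
  have hE := hasDerivAt_E19 hx
  have hA : HasDerivAt (fun x => 2 * E19 x * Real.exp (-E19 x) / x ^ 6)
      (2 * Real.exp (-E19 x) * (-2 * E19 x / x ^ 3) * (1 - E19 x) / x ^ 6
        - 12 * E19 x * Real.exp (-E19 x) / x ^ 7) x := by
    have hnum : HasDerivAt (fun x => 2 * E19 x * Real.exp (-E19 x))
        (2 * (E19 x * (-2 / x ^ 3)) * Real.exp (-E19 x)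
          + 2 * E19 x * (Real.exp (-E19 x) * -(E19 x * (-2 / x ^ 3)))) x :=
      ((hE.const_mul 2).mul (hE.neg.exp))
    have hden : HasDerivAt (fun x : ℝ => x ^ 6) ((6 : ℕ) * x ^ 5) x := by
      simpa using hasDerivAt_pow 6 x
    have h := hnum.div hden (by positivity)
    refine h.congr_deriv ?_
    field_simp
    ring
  have hB : HasDerivAt (fun x => 2 * E19 x - 2 - 3 * x ^ 2)
      (-4 * E19 x / x ^ 3 - 6 * x) x := by
    have h2x : HasDerivAt (fun x : ℝ => 3 * x ^ 2) (3 * (2 * x)) x := by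
      simpa using ((hasDerivAt_pow 2 x).const_mul 3)
    have := ((hE.const_mul 2).sub_const 2).sub h2x
    refine this.congr_deriv ?_
    field_simp
    ring
  have := hA.mul hB
  refine this.congr_deriv ?_
  unfold ah3
  ring

lemma E19_pos (x : ℝ) : 0 < E19 x := Real.exp_pos _

lemma ah1_pos {x : ℝ} (hx : 0 < x) : 0 < ah1 x := by
  unfold ah1
  have := E19_pos x
  have := Real.exp_pos (-E19 x)
  positivity

lemma ah1_nonneg {x : ℝ} (hx : 0 ≤ x) : 0 ≤ ah1 x := by
  rcases eq_or_lt_of_le hx with h | h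
  · simp [ah1, ← h]
  · exact (ah1_pos h).le

lemma one_add_ah1_pos {x : ℝ} (hx : 0 ≤ x) : 0 < 1 + ah1 x := by
  have := ah1_nonneg hx; linarith

lemma f19_zero : f19 0 = 0 := by simp [f19, h19]

lemma hasDerivAt_f19 {x : ℝ} (hx : x ≠ 0) : HasDerivAt f19 (1 + ah1 x) x :=
  (hasDerivAt_id x).add (hasDerivAt_h19 hx) |>.congr_deriv (by ring)

lemma h19_nonneg (x : ℝ) : 0 ≤ h19 x := by
  unfold h19; split
  · exact le_refl 0
  · exact (Real.exp_pos _).le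

lemma f19_strictMonoOn : StrictMonoOn f19 (Set.Icc (0:ℝ) 1) := by
  intro a ha b hb hab
  have hmono : h19 a ≤ h19 b := by
    rcases eq_or_lt_of_le ha.1 with h | h
    · rw [← h]; simpa [h19] using h19_nonneg b
    · have hb0 : (0:ℝ) < b := lt_trans h hab
      rw [h19, h19, if_neg (ne_of_gt h), if_neg (ne_of_gt hb0)]
      apply Real.exp_le_exp.2
      apply neg_le_neg
      apply Real.exp_le_exp.2
      apply div_le_div_of_nonneg_left one_pos.le (by positivity) (by nlinarith)
  simp only [f19]
  linarith

lemma f19_one_pos : 0 < f19 1 := by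
  have : h19 1 ≥ 0 := h19_nonneg 1
  simp only [f19]; linarith

lemma tendsto_linear_sub_exp (a b : ℝ) (hb : 0 < b) :
    Tendsto (fun t : ℝ => a * t - b * Real.exp t) atTop atBot := by
  apply tendsto_atBot_mono' _ _ (tendsto_neg_atTop_atBot.comp tendsto_id)
  have h1 : ∀ᶠ t : ℝ in atTop, (a + 1) / b ≤ Real.exp t / t :=
    (Real.tendsto_exp_div_pow_atTop 1).eventually_ge_atTop _ |>.mono (by
      intro t ht; simpa using ht)
  filter_upwards [h1, eventually_gt_atTop (0:ℝ)] with t ht ht0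
  have : (a + 1) * t ≤ b * Real.exp t := by
    rw [div_le_div_iff₀ hb ht0] at ht
    nlinarith
  simp only [Function.comp, id_eq]
  nlinarith

lemma tendsto_one_div_sq : Tendsto (fun u : ℝ => 1 / u ^ 2) (nhdsWithin 0 (Set.Ioi 0)) atTop := by
  simp only [one_div]
  apply tendsto_inv_nhdsGT_zero.comp
  apply tendsto_nhdsWithin_iff.2 ⟨?_, ?_⟩
  · have : Tendsto (fun u : ℝ => u ^ 2) (nhdsWithin 0 (Set.Ioi 0)) (nhds 0) := by
      have := (continuous_pow 2).tendsto (0:ℝ)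
      simpa using this.mono_left nhdsWithin_le_nhds
    exact this
  · filter_upwards [self_mem_nhdsWithin] with u hu
    exact Set.mem_Ioi.2 (pow_pos (Set.mem_Ioi.1 hu) 2)

lemma eventually_small : ∀ᶠ u : ℝ in nhdsWithin 0 (Set.Ioi 0), 0 < u ∧ u < 1/2 := by
  filter_upwards [self_mem_nhdsWithin,
    eventually_nhdsWithin_of_eventually_nhds (eventually_lt_nhds (by norm_num : (0:ℝ) < 1/2))]
    with u hu hu2
  exact ⟨hu, hu2⟩

lemma sq_le_exp_two_mul {t : ℝ} (ht : 0 ≤ t) : t ^ 2 ≤ Real.exp (2 * t) := by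
  have h1 : t ≤ Real.exp t := (Real.add_one_le_exp t).trans' (by linarith)
  have h2 : Real.exp (2 * t) = Real.exp t * Real.exp t := by
    rw [two_mul, Real.exp_add]
  nlinarith [Real.exp_pos t]

lemma ah1_le {u : ℝ} (h0 : 0 < u) (h1 : u ≤ 1) :
    ah1 u ≤ 2 * Real.exp (3 * (1 / u ^ 2) - Real.exp (1 / u ^ 2)) := by
  set t := 1 / u ^ 2 with htdef
  have ht0 : 0 < t := by positivity
  have hu3 : (1:ℝ) / u ^ 3 ≤ t ^ 2 := by
    rw [htdef]
    rw [div_pow, one_pow]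
    rw [div_le_div_iff₀ (by positivity) (by positivity)]
    nlinarith [pow_pos h0 3, pow_pos h0 4]
  have hsq : t ^ 2 ≤ Real.exp (2 * t) := sq_le_exp_two_mul ht0.le
  have hE : E19 u = Real.exp t := rfl
  have hrw : 2 * Real.exp (3 * t - Real.exp t)
      = 2 * Real.exp t * Real.exp (-Real.exp t) * Real.exp (2 * t) := by
    rw [show 3 * t - Real.exp t = t + -Real.exp t + 2 * t by ring, Real.exp_add, Real.exp_add]; ring
  rw [ah1, hE, hrw, div_eq_mul_one_div]
  have hpos : 0 < 2 * Real.exp t * Real.exp (-Real.exp t) := by positivity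
  calc 2 * Real.exp t * Real.exp (-Real.exp t) * (1 / u ^ 3)
      ≤ 2 * Real.exp t * Real.exp (-Real.exp t) * Real.exp (2 * t) := by
        apply mul_le_mul_of_nonneg_left (hu3.trans hsq) hpos.le
    _ = _ := rfl

lemma E19_ge_one {u : ℝ} (h0 : 0 < u) (h1 : u ≤ 1) : 1 ≤ E19 u := by
  rw [E19]
  have : (0:ℝ) ≤ 1 / u ^ 2 := by positivity
  calc (1:ℝ) = Real.exp 0 := by simp
    _ ≤ _ := Real.exp_le_exp.2 this

lemma ah2_nonneg {u : ℝ} (h0 : 0 < u) (h1 : u ≤ 1) : 0 ≤ ah2 u := by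
  have hB : 0 ≤ 2 * E19 u - 2 - 3 * u ^ 2 := by
    have ht : (1:ℝ) ≤ 1 / u ^ 2 := by
      rw [le_div_iff₀ (by positivity)]; nlinarith
    have : Real.exp 1 ≤ E19 u := by
      rw [E19]; exact Real.exp_le_exp.2 ht
    have he : (2.7182818283 : ℝ) < Real.exp 1 := Real.exp_one_gt_d9
    nlinarith
  have hL : 0 ≤ 2 * E19 u * Real.exp (-E19 u) / u ^ 6 := by
    have := E19_pos u; have := Real.exp_pos (-E19 u); positivity
  exact mul_nonneg hL hB

lemma ah2_div_le {u : ℝ} (h0 : 0 < u) (h1 : u ≤ 1) :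
    ah2 u / u ≤ 4 * Real.exp (6 * (1 / u ^ 2) - Real.exp (1 / u ^ 2)) := by
  set t := 1 / u ^ 2 with htdef
  have ht0 : 0 < t := by positivity
  have hE : E19 u = Real.exp t := rfl
  have hP : 0 < Real.exp t := Real.exp_pos _
  have hQ : 0 < Real.exp (-Real.exp t) := Real.exp_pos _
  have hu7 : (1:ℝ) / u ^ 7 ≤ t ^ 4 := by
    rw [htdef, div_pow, one_pow, div_le_div_iff₀ (by positivity) (by positivity)]
    have h87 : u ^ 8 ≤ u ^ 7 := pow_le_pow_of_le_one h0.le h1 (by norm_num)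
    nlinarith
  have ht4 : t ^ 4 ≤ Real.exp (4 * t) := by
    have h2 := sq_le_exp_two_mul ht0.le
    have h4 : Real.exp (4 * t) = Real.exp (2 * t) * Real.exp (2 * t) := by
      rw [← Real.exp_add]; ring_nf
    nlinarith [Real.exp_pos (2*t), pow_pos ht0 2]
  have hrw : 4 * Real.exp (6 * t - Real.exp t)
      = 4 * (Real.exp t * Real.exp t) * Real.exp (-Real.exp t) * Real.exp (4 * t) := by
    rw [show 6 * t - Real.exp t = t + t + -Real.exp t + 4 * t by ring,
      Real.exp_add, Real.exp_add, Real.exp_add]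
    ring
  rw [hrw]
  have step1 : ah2 u / u ≤ 4 * (Real.exp t * Real.exp t) * Real.exp (-Real.exp t) * (1 / u ^ 7) := by
    have hB : 2 * E19 u - 2 - 3 * u ^ 2 ≤ 2 * Real.exp t := by rw [hE]; nlinarith
    have hlead : (0:ℝ) ≤ 2 * Real.exp t * Real.exp (-Real.exp t) / u ^ 6 := by positivity
    have hstep : ah2 u ≤ 2 * Real.exp t * Real.exp (-Real.exp t) / u ^ 6 * (2 * Real.exp t) := by
      rw [ah2, hE]
      exact mul_le_mul_of_nonneg_left hB hlead
    calc ah2 u / u ≤ 2 * Real.exp t * Real.exp (-Real.exp t) / u ^ 6 * (2 * Real.exp t) / u := by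
          gcongr
      _ = 4 * (Real.exp t * Real.exp t) * Real.exp (-Real.exp t) * (1 / u ^ 7) := by
          field_simp; ring
  refine step1.trans ?_
  gcongr
  exact hu7.trans ht4

lemma ah2_ge {u : ℝ} (h0 : 0 < u) (h2 : u ≤ 1/2) :
    2 * Real.exp (-E19 u) / u ^ 6 ≤ ah2 u := by
  have ht4 : (4:ℝ) ≤ 1 / u ^ 2 := by
    rw [le_div_iff₀ (by positivity)]; nlinarith
  have hE5 : (5:ℝ) ≤ E19 u := by
    have : Real.exp 4 ≤ E19 u := Real.exp_le_exp.2 ht4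
    nlinarith [Real.add_one_le_exp (4:ℝ)]
  have hE1 : (1:ℝ) ≤ E19 u := by linarith
  have hB : E19 u ≤ 2 * E19 u - 2 - 3 * u ^ 2 := by nlinarith
  have hQ : 0 < Real.exp (-E19 u) := Real.exp_pos _
  have hlead : (0:ℝ) < 2 * E19 u * Real.exp (-E19 u) / u ^ 6 := by
    have := E19_pos u; positivity
  calc 2 * Real.exp (-E19 u) / u ^ 6
      = 2 * 1 * Real.exp (-E19 u) / u ^ 6 * 1 := by ring
    _ ≤ 2 * Real.exp (-E19 u) / u ^ 6 * (E19 u * (2 * E19 u - 2 - 3 * u ^ 2)) := by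
        rw [mul_one, mul_one]
        have h1B : (1:ℝ) ≤ E19 u * (2 * E19 u - 2 - 3 * u ^ 2) := by nlinarith
        nlinarith [mul_le_mul_of_nonneg_left h1B (le_of_lt (by positivity :
          (0:ℝ) < 2 * Real.exp (-E19 u) / u ^ 6))]
    _ = ah2 u := by rw [ah2]; ring

lemma tendsto_bound_exp (a : ℝ) :
    Tendsto (fun u : ℝ => Real.exp (a * (1 / u ^ 2) - Real.exp (1 / u ^ 2)))
      (nhdsWithin 0 (Set.Ioi 0)) (nhds 0) := by
  exact Real.tendsto_exp_atBot.comp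
    (((tendsto_linear_sub_exp a 1 one_pos).comp tendsto_one_div_sq).congr (by
      intro u; simp))

lemma tendsto_ah1_zero : Tendsto ah1 (nhdsWithin 0 (Set.Ioi 0)) (nhds 0) := by
  apply squeeze_zero' ?_ ?_ (by simpa using (tendsto_bound_exp 3).const_mul 2)
  · filter_upwards [eventually_small] with u hu
    exact (ah1_pos hu.1).le
  · filter_upwards [eventually_small] with u hu
    simpa [one_div] using ah1_le hu.1 (by linarith [hu.2])

lemma tendsto_ah2_div_zero :
    Tendsto (fun u => ah2 u / u) (nhdsWithin 0 (Set.Ioi 0)) (nhds 0) := by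
  apply squeeze_zero' ?_ ?_ (by simpa using (tendsto_bound_exp 6).const_mul 4)
  · filter_upwards [eventually_small] with u hu
    exact div_nonneg (ah2_nonneg hu.1 (by linarith [hu.2])) hu.1.le
  · filter_upwards [eventually_small] with u hu
    simpa [one_div] using ah2_div_le hu.1 (by linarith [hu.2])

lemma tendsto_ah2_zero : Tendsto ah2 (nhdsWithin 0 (Set.Ioi 0)) (nhds 0) := by
  have h := tendsto_ah2_div_zero.mul
    (tendsto_id.mono_left (nhdsWithin_le_nhds : nhdsWithin (0:ℝ) (Set.Ioi 0) ≤ nhds 0))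
  simp only [zero_mul] at h
  apply h.congr'
  filter_upwards [self_mem_nhdsWithin] with u hu
  have : u ≠ 0 := ne_of_gt hu
  field_simp
  rfl

noncomputable def N19 (c d u : ℝ) : ℝ :=
  c * ah2 (c*u+d) * (1 + ah1 u) - (1 + ah1 (c*u+d)) * ah2 u

lemma tendsto_affine_nhdsNe {c d : ℝ} (hc : 0 < c) :
    Tendsto (fun u : ℝ => c * u + d) (nhdsWithin 0 (Set.Ioi 0)) (nhdsWithin d {x | x ≠ d}) := by
  apply tendsto_nhdsWithin_iff.2 ⟨?_, ?_⟩
  · have : Tendsto (fun u : ℝ => c * u + d) (nhds 0) (nhds (c * 0 + d)) :=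
      ((continuous_const.mul continuous_id).add continuous_const).tendsto 0
    simpa using this.mono_left nhdsWithin_le_nhds
  · filter_upwards [self_mem_nhdsWithin] with u hu
    have hu0 : (0:ℝ) < u := hu
    exact ne_of_gt (by nlinarith)

lemma tendsto_affine_nhds {c d : ℝ} :
    Tendsto (fun u : ℝ => c * u + d) (nhdsWithin 0 (Set.Ioi 0)) (nhds d) := by
  have : Tendsto (fun u : ℝ => c * u + d) (nhds 0) (nhds (c * 0 + d)) :=
    ((continuous_const.mul continuous_id).add continuous_const).tendsto 0
  simpa using this.mono_left nhdsWithin_le_nhds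

/-- Case d > 0, ah2 d ≠ 0 -/
lemma key_case1 {c d : ℝ} (hc : 0 < c) (hd : 0 < d) (hne : ah2 d ≠ 0) :
    ∀ᶠ u in nhdsWithin 0 (Set.Ioi 0), N19 c d u ≠ 0 := by
  have hc2 : ContinuousAt ah2 d := (hasDerivAt_ah2 hd.ne').continuousAt
  have hc1 : ContinuousAt ah1 d := (hasDerivAt_ah1 hd.ne').continuousAt
  have hT : Tendsto (fun u => N19 c d u) (nhdsWithin 0 (Set.Ioi 0)) (nhds (c * ah2 d)) := by
    have h1 : Tendsto (fun u => ah2 (c*u+d)) (nhdsWithin 0 (Set.Ioi 0)) (nhds (ah2 d)) :=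
      hc2.tendsto.comp tendsto_affine_nhds
    have h2 : Tendsto (fun u => ah1 (c*u+d)) (nhdsWithin 0 (Set.Ioi 0)) (nhds (ah1 d)) :=
      hc1.tendsto.comp tendsto_affine_nhds
    have := ((tendsto_const_nhds (x := c)).mul h1 |>.mul
        ((tendsto_const_nhds (x := (1:ℝ))).add tendsto_ah1_zero)).sub
      (((tendsto_const_nhds (x := (1:ℝ))).add h2).mul tendsto_ah2_zero)
    simpa [N19] using this
  exact hT.eventually_ne (by simp [hne, hc.ne'])

/-- Case d > 0, ah2 d = 0 -/
lemma key_case2 {c d : ℝ} (hc : 0 < c) (hd : 0 < d) (heq : ah2 d = 0) :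
    ∀ᶠ u in nhdsWithin 0 (Set.Ioi 0), N19 c d u ≠ 0 := by
  have hB : 2 * E19 d - 2 - 3 * d ^ 2 = 0 := by
    have hlead : 0 < 2 * E19 d * Real.exp (-E19 d) / d ^ 6 := by
      have := E19_pos d; positivity
    rcases mul_eq_zero.1 heq with h | h
    · exact absurd h hlead.ne'
    · exact h
  have hah3 : ah3 d < 0 := by
    rw [ah3, hB, mul_zero, zero_add]
    have h1 : 0 < 2 * E19 d * Real.exp (-E19 d) / d ^ 6 := by
      have := E19_pos d; positivity
    have h2 : -4 * E19 d / d ^ 3 - 6 * d < 0 := by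
      have hE := E19_pos d
      have h4 : 0 < 4 * E19 d / d ^ 3 := by positivity
      have h5 : -4 * E19 d / d ^ 3 = -(4 * E19 d / d ^ 3) := by ring
      linarith
    exact mul_neg_of_pos_of_neg h1 h2
  have hslope : Tendsto (fun u => ah2 (c*u+d) / (c*u)) (nhdsWithin 0 (Set.Ioi 0))
      (nhds (ah3 d)) := by
    have h := hasDerivAt_iff_tendsto_slope.1 (hasDerivAt_ah2 hd.ne')
    have h2 := h.comp (tendsto_affine_nhdsNe (d := d) hc)
    apply h2.congr'
    filter_upwards [self_mem_nhdsWithin] with u hu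
    have hu0 : (0:ℝ) < u := hu
    simp only [Function.comp, slope_def_field, heq]
    rw [add_sub_cancel_right, sub_zero]
  -- eventually ah2 (c*u+d) < 0
  have hneg : ∀ᶠ u in nhdsWithin 0 (Set.Ioi 0), ah2 (c*u+d) < 0 := by
    have hlt : ∀ᶠ u in nhdsWithin 0 (Set.Ioi 0), ah2 (c*u+d) / (c*u) < ah3 d / 2 :=
      hslope.eventually_lt_const (by linarith)
    filter_upwards [hlt, self_mem_nhdsWithin] with u hu hu0
    have hcu : (0:ℝ) < c * u := by exact mul_pos hc hu0
    have := (div_lt_iff₀ hcu).1 hu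
    nlinarith
  filter_upwards [hneg, eventually_small] with u h1 h2
  have hu0 := h2.1
  have hcu : (0:ℝ) < c * u + d := by nlinarith
  have term1 : c * ah2 (c*u+d) * (1 + ah1 u) < 0 := by
    have h1a : 0 < 1 + ah1 u := one_add_ah1_pos hu0.le
    have : c * ah2 (c*u+d) < 0 := mul_neg_of_pos_of_neg hc h1
    exact mul_neg_of_neg_of_pos this h1a
  have term2 : 0 ≤ (1 + ah1 (c*u+d)) * ah2 u :=
    mul_nonneg (one_add_ah1_pos hcu.le).le (ah2_nonneg hu0 (by linarith [h2.2]))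
  have : N19 c d u < 0 := by rw [N19]; linarith
  exact this.ne

lemma ah2_le_raw {x : ℝ} (hx : 0 < x) :
    ah2 x ≤ 2 * E19 x * Real.exp (-E19 x) / x ^ 6 * (2 * E19 x) := by
  have hlead : (0:ℝ) ≤ 2 * E19 x * Real.exp (-E19 x) / x ^ 6 := by
    have := E19_pos x; positivity
  have hB : 2 * E19 x - 2 - 3 * x ^ 2 ≤ 2 * E19 x := by nlinarith
  exact mul_le_mul_of_nonneg_left hB hlead

/-- Case d = 0 -/
lemma key_case3 {c : ℝ} (hc : 0 < c) (hc1 : c < 1) :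
    ∀ᶠ u in nhdsWithin 0 (Set.Ioi 0), N19 c 0 u ≠ 0 := by
  have hs_t : Tendsto (fun u : ℝ => 1 / (c*u) ^ 2) (nhdsWithin 0 (Set.Ioi 0)) atTop := by
    have h := tendsto_one_div_sq.const_mul_atTop (show (0:ℝ) < 1/c^2 by positivity)
    apply h.congr
    intro u
    rw [mul_pow]
    field_simp
  -- eventually exp (1/u^2) ≤ exp (1/(c*u)^2) / 2
  have hhalf : ∀ᶠ u : ℝ in nhdsWithin 0 (Set.Ioi 0),
      Real.exp (1/u^2) ≤ Real.exp (1/(c*u)^2) / 2 := by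
    have hdiff : Tendsto (fun u : ℝ => (1/c^2 - 1) * (1/u^2)) (nhdsWithin 0 (Set.Ioi 0)) atTop := by
      apply tendsto_one_div_sq.const_mul_atTop
      have : 1 < 1/c^2 := by
        rw [lt_div_iff₀ (by positivity)]
        nlinarith
      linarith
    filter_upwards [hdiff.eventually_ge_atTop (Real.log 2), self_mem_nhdsWithin] with u hu hu0
    have hu0' : (0:ℝ) < u := hu0
    have hst : 1/(c*u)^2 - 1/u^2 = (1/c^2 - 1) * (1/u^2) := by
      rw [mul_pow]; field_simp
    have h2 : (2:ℝ) ≤ Real.exp (1/(c*u)^2 - 1/u^2) := by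
      calc (2:ℝ) = Real.exp (Real.log 2) := (Real.exp_log (by norm_num)).symm
        _ ≤ _ := Real.exp_le_exp.2 (by rw [hst]; exact hu)
    rw [Real.exp_sub, le_div_iff₀ (Real.exp_pos _)] at h2
    rw [le_div_iff₀ (by norm_num)]
    nlinarith [Real.exp_pos (1/(c*u)^2), Real.exp_pos (1/u^2)]
  -- the main smallness fact
  have hsmall : ∀ᶠ u : ℝ in nhdsWithin 0 (Set.Ioi 0),
      (4/c^5) * (E19 (c*u) ^ 2 * Real.exp (-E19 (c*u)) * Real.exp (E19 u)) < 1 := by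
    have hPhi : Tendsto (fun u : ℝ =>
        2 * (1/(c*u)^2) - Real.exp (1/(c*u)^2) + Real.exp (1/u^2))
        (nhdsWithin 0 (Set.Ioi 0)) atBot := by
      apply tendsto_atBot_mono' _ _ (((tendsto_linear_sub_exp 2 (1/2) (by norm_num)).comp hs_t))
      filter_upwards [hhalf] with u hu
      simp only [Function.comp]
      linarith
    have hexp : Tendsto (fun u : ℝ => (4/c^5) * Real.exp
        (2 * (1/(c*u)^2) - Real.exp (1/(c*u)^2) + Real.exp (1/u^2)))
        (nhdsWithin 0 (Set.Ioi 0)) (nhds 0) := by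
      simpa using (Real.tendsto_exp_atBot.comp hPhi).const_mul (4/c^5)
    have := hexp.eventually_lt_const (show (0:ℝ) < 1 by norm_num)
    apply this.mono
    intro u hu
    have hrw : E19 (c*u) ^ 2 * Real.exp (-E19 (c*u)) * Real.exp (E19 u)
        = Real.exp (2 * (1/(c*u)^2) - Real.exp (1/(c*u)^2) + Real.exp (1/u^2)) := by
      rw [E19, E19,
        show 2 * (1/(c*u)^2) - Real.exp (1/(c*u)^2) + Real.exp (1/u^2)
          = (1/(c*u)^2) + (1/(c*u)^2) + -(Real.exp (1/(c*u)^2)) + Real.exp (1/u^2) by ring,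
        Real.exp_add, Real.exp_add, Real.exp_add]
      ring
    rw [hrw]
    exact hu
  -- conclude
  filter_upwards [hsmall, eventually_small, tendsto_ah1_zero.eventually_lt_const one_pos]
    with u hlt hu hah1
  have hu0 := hu.1
  have hcu0 : 0 < c * u := mul_pos hc hu0
  have hcu1 : c * u ≤ 1/2 := by nlinarith [hu.2]
  have hEc := E19_pos (c*u)
  have hEu := E19_pos u
  have hQc := Real.exp_pos (-E19 (c*u))
  have hQu := Real.exp_pos (-E19 u)
  -- 2*c*ah2 (c*u) < ah2 u
  have hmain : 2 * c * ah2 (c*u) < ah2 u := by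
    have hup : ah2 (c*u) ≤ 4 * E19 (c*u) ^ 2 * Real.exp (-E19 (c*u)) / (c*u) ^ 6 := by
      have := ah2_le_raw hcu0
      calc ah2 (c*u) ≤ 2 * E19 (c*u) * Real.exp (-E19 (c*u)) / (c*u) ^ 6 * (2 * E19 (c*u)) :=
            ah2_le_raw hcu0
        _ = 4 * E19 (c*u) ^ 2 * Real.exp (-E19 (c*u)) / (c*u) ^ 6 := by ring
    have hlow : 2 * Real.exp (-E19 u) / u ^ 6 ≤ ah2 u := ah2_ge hu0 (by linarith [hu.2])
    have hlt2 : (4/c^5) * E19 (c*u) ^ 2 * Real.exp (-E19 (c*u)) < Real.exp (-E19 u) := by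
      have hEpos : 0 < Real.exp (E19 u) := Real.exp_pos _
      have hrw : Real.exp (-E19 u) = 1 / Real.exp (E19 u) := by
        rw [Real.exp_neg, one_div]
      rw [hrw, lt_div_iff₀ hEpos]
      nlinarith
    have hu6 : (0:ℝ) < u ^ 6 := by positivity
    calc 2 * c * ah2 (c*u) ≤ 2 * c * (4 * E19 (c*u) ^ 2 * Real.exp (-E19 (c*u)) / (c*u) ^ 6) := by
          nlinarith
      _ = (8/c^5) * E19 (c*u) ^ 2 * Real.exp (-E19 (c*u)) / u ^ 6 := by
          rw [mul_pow]
          field_simp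
          ring
      _ < 2 * Real.exp (-E19 u) / u ^ 6 := by
          rw [div_lt_div_iff₀ hu6 hu6]
          calc 8/c^5 * E19 (c*u)^2 * Real.exp (-E19 (c*u)) * u^6
              = (4/c^5 * E19 (c*u)^2 * Real.exp (-E19 (c*u))) * (2*u^6) := by ring
            _ < Real.exp (-E19 u) * (2*u^6) :=
                mul_lt_mul_of_pos_right hlt2 (by positivity)
            _ = 2 * Real.exp (-E19 u) * u^6 := by ring
      _ ≤ ah2 u := hlow
  have term1 : c * ah2 (c*u) * (1 + ah1 u) ≤ 2 * c * ah2 (c*u) := by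
    have h1 : 0 ≤ c * ah2 (c*u) := mul_nonneg hc.le (ah2_nonneg hcu0 (by linarith))
    nlinarith [ah1_nonneg hu0.le]
  have term2 : ah2 u ≤ (1 + ah1 (c*u)) * ah2 u := by
    nlinarith [ah1_nonneg hcu0.le, ah2_nonneg hu0 (by linarith [hu.2] : u ≤ 1)]
  have : N19 c 0 u < 0 := by
    have : c * u + 0 = c * u := by ring
    rw [N19, this]
    linarith
  exact this.ne

lemma key_N19 {c d : ℝ} (hc : 0 < c) (hc1 : c < 1) (hd : 0 ≤ d) :
    ∀ᶠ u in nhdsWithin 0 (Set.Ioi 0), N19 c d u ≠ 0 := by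
  rcases eq_or_lt_of_le hd with h | h
  · rw [← h]; exact key_case3 hc hc1
  · rcases eq_or_ne (ah2 d) 0 with h2 | h2
    · exact key_case2 hc h h2
    · exact key_case1 hc h h2

lemma analyticAt_E19 {x : ℝ} (hx : x ≠ 0) : AnalyticAt ℝ E19 x := by
  apply analyticAt_rexp.comp
  exact analyticAt_const.div (analyticAt_id.pow 2) (pow_ne_zero 2 hx)

lemma analyticAt_ah1 {x : ℝ} (hx : x ≠ 0) : AnalyticAt ℝ ah1 x := by
  have hE := analyticAt_E19 hx
  exact ((analyticAt_const.mul hE).mul (analyticAt_rexp.comp hE.neg)).div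
    (analyticAt_id.pow 3) (pow_ne_zero 3 hx)

lemma analyticAt_ah2 {x : ℝ} (hx : x ≠ 0) : AnalyticAt ℝ ah2 x := by
  have hE := analyticAt_E19 hx
  exact (((analyticAt_const.mul hE).mul (analyticAt_rexp.comp hE.neg)).div
    (analyticAt_id.pow 6) (pow_ne_zero 6 hx)).mul
    (((analyticAt_const.mul hE).sub analyticAt_const).sub
      (analyticAt_const.mul (analyticAt_id.pow 2)))

lemma analyticOnNhd_N19 {c d : ℝ} (hc : 0 < c) (hd : 0 ≤ d) :
    AnalyticOnNhd ℝ (N19 c d) (Set.Ioi (0:ℝ)) := by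
  intro x hx
  have hx0 : (0:ℝ) < x := hx
  have hcd : c * x + d ≠ 0 := by positivity
  have haff : AnalyticAt ℝ (fun u : ℝ => c * u + d) x :=
    (analyticAt_const.mul analyticAt_id).add analyticAt_const
  have h1 : AnalyticAt ℝ (fun u : ℝ => ah2 (c * u + d)) x := by
    have := AnalyticAt.comp (f := fun u : ℝ => c * u + d) (x := x) (analyticAt_ah2 hcd) haff
    exact this
  have h2 : AnalyticAt ℝ (fun u : ℝ => ah1 (c * u + d)) x := by
    have := AnalyticAt.comp (f := fun u : ℝ => c * u + d) (x := x) (analyticAt_ah1 hcd) haff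
    exact this
  exact ((analyticAt_const.mul h1).mul
      (analyticAt_const.add (analyticAt_ah1 hx0.ne'))).sub
    ((analyticAt_const.add h2).mul (analyticAt_ah2 hx0.ne'))

lemma Z_finite {c d : ℝ} (hc : 0 < c) (hc1 : c < 1) (hd : 0 ≤ d) :
    Set.Finite {u : ℝ | u ∈ Set.Ioo (0:ℝ) 1 ∧ N19 c d u = 0} := by
  by_contra hinf
  have hinf' : Set.Infinite {u : ℝ | u ∈ Set.Ioo (0:ℝ) 1 ∧ N19 c d u = 0} := hinf
  obtain ⟨x, hxK, hacc⟩ := hinf'.exists_accPt_of_subset_isCompact isCompact_Icc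
    (fun u hu => ⟨hu.1.1.le, hu.1.2.le⟩)
  rw [accPt_iff_frequently] at hacc
  have hkey := key_N19 hc hc1 hd
  rcases eq_or_ne x 0 with hx0 | hx0
  · subst hx0
    have hfreq : ∃ᶠ y in nhdsWithin 0 (Set.Ioi 0),
        y ∈ {u : ℝ | u ∈ Set.Ioo (0:ℝ) 1 ∧ N19 c d u = 0} := by
      rw [frequently_nhdsWithin_iff]
      exact hacc.mono (fun y hy => ⟨hy.2, hy.2.1.1⟩)
    obtain ⟨y, hy1, hy2⟩ := (hfreq.and_eventually hkey).exists
    exact hy2 hy1.2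
  · have hxpos : (0:ℝ) < x := lt_of_le_of_ne hxK.1 (Ne.symm hx0)
    have hfreq : ∃ᶠ z in nhdsWithin x {x}ᶜ, N19 c d z = 0 := by
      rw [frequently_nhdsWithin_iff]
      exact hacc.mono (fun y hy => ⟨hy.2.2, hy.1⟩)
    have hEq := (analyticOnNhd_N19 hc hd).eqOn_zero_of_preconnected_of_frequently_eq_zero
      isPreconnected_Ioi hxpos hfreq
    obtain ⟨u, hNu, hu0⟩ := (hkey.and eventually_mem_nhdsWithin).exists
    exact hNu (hEq hu0)

section main

variable {c d : ℝ} (g : ℝ → ℝ)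
variable (hg1 : ∀ x ∈ Set.Icc (0 : ℝ) 1, g (f19 x) = x)
variable (hg2 : ∀ y ∈ Set.Icc (0 : ℝ) (f19 1), g y ∈ Set.Icc (0 : ℝ) 1 ∧ f19 (g y) = y)

lemma f19_mem {x : ℝ} (hx : x ∈ Set.Icc (0:ℝ) 1) : f19 x ∈ Set.Icc (0:ℝ) (f19 1) := by
  have hmono := f19_strictMonoOn.monotoneOn
  constructor
  · have := hmono (Set.left_mem_Icc.2 zero_le_one) hx hx.1
    rwa [f19_zero] at this
  · exact hmono hx (Set.right_mem_Icc.2 zero_le_one) hx.2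

include hg1 hg2 in
lemma g_strictMono : StrictMonoOn g (Set.Icc (0:ℝ) (f19 1)) := by
  intro a ha b hb hab
  by_contra hle
  push_neg at hle
  have h1 := (hg2 a ha)
  have h2 := (hg2 b hb)
  have := f19_strictMonoOn.monotoneOn h2.1 h1.1 hle
  rw [h1.2, h2.2] at this
  exact absurd this (not_le.2 hab)

include hg1 hg2 in
lemma g_mem {y : ℝ} (hy : y ∈ Set.Ioo (0:ℝ) (f19 1)) : g y ∈ Set.Ioo (0:ℝ) 1 := by
  have hyI : y ∈ Set.Icc (0:ℝ) (f19 1) := ⟨hy.1.le, hy.2.le⟩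
  obtain ⟨hmem, hfy⟩ := hg2 y hyI
  constructor
  · rcases eq_or_lt_of_le hmem.1 with h | h
    · exfalso
      have : f19 (g y) = 0 := by rw [← h, f19_zero]
      rw [hfy] at this; exact hy.1.ne' this
    · exact h
  · rcases eq_or_lt_of_le hmem.2 with h | h
    · exfalso; rw [h] at hfy; exact hy.2.ne hfy.symm
    · exact h

include hg1 hg2 in
lemma g_hasDerivAt {y : ℝ} (hy : y ∈ Set.Ioo (0:ℝ) (f19 1)) :
    HasDerivAt g (1 + ah1 (g y))⁻¹ y := by
  have hu := g_mem g hg1 hg2 hy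
  have hcont : ContinuousAt g y := by
    apply StrictMonoOn.continuousAt_of_image_mem_nhds (g_strictMono g hg1 hg2)
      (Icc_mem_nhds hy.1 hy.2)
    apply Filter.mem_of_superset (isOpen_Ioo.mem_nhds hu)
    intro x hx
    exact ⟨f19 x, f19_mem ⟨hx.1.le, hx.2.le⟩, hg1 x ⟨hx.1.le, hx.2.le⟩⟩
  have hfy : g y ∈ Set.Icc (0:ℝ) 1 := ⟨hu.1.le, hu.2.le⟩
  refine HasDerivAt.of_local_left_inverse hcont (hasDerivAt_f19 hu.1.ne') ?_ ?_
  · exact (one_add_ah1_pos hu.1.le).ne'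
  · filter_upwards [isOpen_Ioo.mem_nhds hy] with z hz
    exact (hg2 z ⟨hz.1.le, hz.2.le⟩).2

include hg1 hg2 in
lemma F_hasDerivAt (hc : 0 < c) (hd : 0 ≤ d) {y : ℝ} (hy : y ∈ Set.Ioo (0:ℝ) (f19 1)) :
    HasDerivAt (fun y => f19 (c * g y + d))
      ((1 + ah1 (c * g y + d)) * (c * (1 + ah1 (g y))⁻¹)) y := by
  have hu := g_mem g hg1 hg2 hy
  have hgy := g_hasDerivAt g hg1 hg2 hy
  have hinner : HasDerivAt (fun y => c * g y + d) (c * (1 + ah1 (g y))⁻¹) y :=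
    (hgy.const_mul c).add_const d
  have hpt : c * g y + d ≠ 0 := by nlinarith [hu.1]
  have := HasDerivAt.comp (x := y) (hasDerivAt_f19 hpt) hinner
  exact this

include hg1 hg2 in
lemma main_formula (hc : 0 < c) (hc1 : c < 1) (hd : 0 ≤ d) {y : ℝ}
    (hy : y ∈ Set.Ioo (0:ℝ) (f19 1)) :
    iteratedDerivWithin 2 (fun y => f19 (c * g y + d)) (Set.Icc (0:ℝ) (f19 1)) y
      = c * N19 c d (g y) / (1 + ah1 (g y)) ^ 3 := by
  set s : Set ℝ := Set.Icc (0:ℝ) (f19 1) with hsdef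
  set F : ℝ → ℝ := fun y => f19 (c * g y + d) with hFdef
  set D2 : ℝ → ℝ := fun w => (1 + ah1 (c * g w + d)) * (c * (1 + ah1 (g w))⁻¹) with hD2def
  have huniq : UniqueDiffOn ℝ s := uniqueDiffOn_Icc f19_one_pos
  have hys : y ∈ s := ⟨hy.1.le, hy.2.le⟩
  have hstep1 : iteratedDerivWithin 2 F s y = derivWithin (derivWithin F s) s y := by
    rw [show (2:ℕ) = 1 + 1 from rfl, iteratedDerivWithin_succ, iteratedDerivWithin_one]
  rw [hstep1]
  have hev : derivWithin F s =ᶠ[nhds y] D2 := by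
    filter_upwards [isOpen_Ioo.mem_nhds hy] with z hz
    rw [derivWithin_of_mem_nhds (Icc_mem_nhds hz.1 hz.2),
      (F_hasDerivAt g hg1 hg2 hc hd hz).deriv]
  have hstep2 : derivWithin (derivWithin F s) s y = derivWithin D2 s y :=
    Filter.EventuallyEq.derivWithin_eq (hev.filter_mono nhdsWithin_le_nhds) hev.eq_of_nhds
  rw [hstep2, derivWithin_of_mem_nhds (Icc_mem_nhds hy.1 hy.2)]
  -- now compute deriv D2 y
  have hu := g_mem g hg1 hg2 hy
  have hgy := g_hasDerivAt g hg1 hg2 hy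
  have hpt : c * g y + d ≠ 0 := by nlinarith [hu.1]
  have h1u : (0:ℝ) < 1 + ah1 (g y) := one_add_ah1_pos hu.1.le
  have hinner : HasDerivAt (fun w => c * g w + d) (c * (1 + ah1 (g y))⁻¹) y :=
    (hgy.const_mul c).add_const d
  have hA : HasDerivAt (fun w => ah1 (c * g w + d))
      (ah2 (c * g y + d) * (c * (1 + ah1 (g y))⁻¹)) y :=
    HasDerivAt.comp (x := y) (hasDerivAt_ah1 hpt) hinner
  have hB : HasDerivAt (fun w => ah1 (g w)) (ah2 (g y) * (1 + ah1 (g y))⁻¹) y :=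
    HasDerivAt.comp (x := y) (hasDerivAt_ah1 hu.1.ne') hgy
  have hD2' : HasDerivAt D2
      ((ah2 (c * g y + d) * (c * (1 + ah1 (g y))⁻¹)) * (c * (1 + ah1 (g y))⁻¹)
        + (1 + ah1 (c * g y + d)) *
          (c * (-(ah2 (g y) * (1 + ah1 (g y))⁻¹) / (1 + ah1 (g y)) ^ 2))) y := by
    have hBinv : HasDerivAt (fun w => (1 + ah1 (g w))⁻¹)
        (-(ah2 (g y) * (1 + ah1 (g y))⁻¹) / (1 + ah1 (g y)) ^ 2) y :=
      (hB.const_add 1).inv h1u.ne'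
    exact ((hA.const_add 1).mul (hBinv.const_mul c))
  rw [hD2'.deriv]
  rw [N19]
  field_simp
  ring
end main


/-- For `f(x) = x + exp(−exp(x^{−2}))`, `λ(x) = cx + d` with `0 < c < 1`, `d ≥ 0`, and `g`
the inverse of `f` restricted to `[0,1]`, the set `{y ∈ [0, f(1)] : (f ∘ λ ∘ g)''(y) = 0}`
is finite. -/
theorem stmt19 (c d : ℝ) (hc : 0 < c) (hc1 : c < 1) (hd : 0 ≤ d)
    (g : ℝ → ℝ)
    (hg1 : ∀ x ∈ Set.Icc (0 : ℝ) 1, g (f19 x) = x)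
    (hg2 : ∀ y ∈ Set.Icc (0 : ℝ) (f19 1), g y ∈ Set.Icc (0 : ℝ) 1 ∧ f19 (g y) = y) :
    {y ∈ Set.Icc (0 : ℝ) (f19 1) |
      iteratedDerivWithin 2 (fun y => f19 (c * g y + d))
        (Set.Icc (0 : ℝ) (f19 1)) y = 0}.Finite := by
  set T : Set ℝ := {y ∈ Set.Ioo (0:ℝ) (f19 1) | N19 c d (g y) = 0} with hTdef
  have hTfin : T.Finite := by
    apply Set.Finite.of_finite_image (f := g)
    · apply (Z_finite hc hc1 hd).subset
      rintro z ⟨y, ⟨hy1, hy2⟩, rfl⟩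
      exact ⟨g_mem g hg1 hg2 hy1, hy2⟩
    · intro y1 hy1 y2 hy2 heq
      have h1 := (hg2 y1 ⟨hy1.1.1.le, hy1.1.2.le⟩).2
      have h2 := (hg2 y2 ⟨hy2.1.1.le, hy2.1.2.le⟩).2
      rw [← h1, ← h2, heq]
  apply ((hTfin.insert 0).insert (f19 1)).subset
  rintro y ⟨hys, hzero⟩
  rcases eq_or_lt_of_le hys.1 with h0 | h0
  · exact Set.mem_insert_iff.2 (Or.inr (Set.mem_insert_iff.2 (Or.inl h0.symm)))
  rcases eq_or_lt_of_le hys.2 with h1 | h1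
  · exact Set.mem_insert_iff.2 (Or.inl h1)
  have hyIoo : y ∈ Set.Ioo (0:ℝ) (f19 1) := ⟨h0, h1⟩
  have hform := main_formula g hg1 hg2 hc hc1 hd hyIoo
  rw [hform] at hzero
  have hden : (1 + ah1 (g y)) ^ 3 ≠ 0 :=
    pow_ne_zero 3 (one_add_ah1_pos (g_mem g hg1 hg2 hyIoo).1.le).ne'
  have hN : N19 c d (g y) = 0 := by
    rcases div_eq_zero_iff.1 hzero with h | h
    · rcases mul_eq_zero.1 h with h' | h'
      · exact absurd h' hc.ne'
      · exact h'
    · exact absurd h hden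
  exact Set.mem_insert_iff.2 (Or.inr (Set.mem_insert_iff.2 (Or.inr ⟨hyIoo, hN⟩)))
end
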